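/- arXiv:1506.07977 — 2 statements merged into one kernel-verified Lean document; each statement's English description precedes it below -/
import Mathlib

section
/- Closed form of the non-backtracking walk generating function (equation (2.16)): for every d ≥ 1, every complex z with |z| < 1/(2d−1), and every k ∈ ℝ^d, the double series Σ_{x∈ℤ^d} Σ_{n≥0} b_n(x)·z^n·e^{i k·x} converges absolutely, the quantity 1 + (2d−1)z² − 2dz·D̂(k) is nonzero, and Σ_{x∈ℤ^d} Σ_{n≥0} b_n(x)·z^n·e^{i k·x} = (1 − z²)/(1 + (2d−1)z² − 2dz·D̂(k)). -/
open MeasureTheory Filter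
open scoped ENNReal

namespace NoBLE

/-- Vertices of the hypercubic lattice `ℤ^d`. -/
abbrev Vertex (d : ℕ) := Fin d → ℤ

/-- The Euclidean norm `‖x‖₂` of a lattice point. -/
noncomputable def norm2 {d : ℕ} (x : Vertex d) : ℝ :=
  Real.sqrt (∑ i, ((x i : ℝ)) ^ 2)

/-- The `ℓ¹`-norm `‖x‖₁` of a lattice point. -/
def norm1 {d : ℕ} (x : Vertex d) : ℤ := ∑ i, |x i|

/-- The standard unit vector `e_i`. -/
def basis {d : ℕ} (i : Fin d) : Vertex d := fun j => if j = i then 1 else 0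

/-- Directions `ι ∈ {±1, …, ±d}`: `(i, true)` stands for `+e_i`, `(i, false)` for `−e_i`. -/
abbrev Dir (d : ℕ) := Fin d × Bool

/-- The unit vector `e_ι` attached to the direction `ι`. -/
def dirVec {d : ℕ} (ι : Dir d) : Vertex d := if ι.2 then basis ι.1 else -basis ι.1

/-- The opposite direction `−ι`. -/
def dirNeg {d : ℕ} (ι : Dir d) : Dir d := (ι.1, !ι.2)

/-- Nearest-neighbour bonds of `ℤ^d`: the pair `(x, i)` encodes the undirected bond
`{x, x + e_i}`; every nearest-neighbour bond has a unique such representation. -/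
abbrev Bond (d : ℕ) := Vertex d × Fin d

/-- Bond configurations: each bond is either occupied (`true`) or vacant (`false`). -/
abbrev Config (d : ℕ) := Bond d → Bool

noncomputable instance (d : ℕ) : Encodable (Bond d) := Encodable.ofCountable _

/-- The undirected nearest-neighbour bond `{x, y}` is occupied in the configuration `ω`. -/
def Occ {d : ℕ} (ω : Config d) (x y : Vertex d) : Prop :=
  (∃ i, y = x + basis i ∧ ω (x, i) = true) ∨ (∃ i, x = y + basis i ∧ ω (y, i) = true)

/-- `x ↔ y`: `x` and `y` are joined by a path of occupied bonds (in particular `x ↔ x`). -/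
def Conn {d : ℕ} (ω : Config d) (x y : Vertex d) : Prop :=
  Relation.ReflTransGen (Occ ω) x y

/-- Splitting a uniform-`[0,1)` random variable into an i.i.d. sequence of Bernoulli(`p`)
bits: `bit p n u` is the `n`-th bit. -/
noncomputable def bit (p : ℝ) : ℕ → ℝ → Bool
  | 0 => fun u => if u < p then true else false
  | n + 1 => fun u => bit p n (if u < p then u / p else (u - p) / (1 - p))

/-- The Bernoulli(`p`) bond-percolation measure `ℙ_p` on `Config d`, i.e. the product over
all bonds of Bernoulli(`p`) measures on `{occupied, vacant}`; it is realised as the joint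
law of the i.i.d. Bernoulli(`p`) family `(bit p (encode b))_{b : Bond d}` driven by a
uniform random variable on `[0,1)`. -/
noncomputable def percMeasure (d : ℕ) (p : ℝ) : Measure (Config d) :=
  Measure.map (fun u => fun b : Bond d => bit p (Encodable.encode b) u)
    (volume.restrict (Set.Ico (0 : ℝ) 1))

/-- The two-point function `τ_p(x) = ℙ_p(0 ↔ x)`, as an extended real number. -/
noncomputable def tauE (d : ℕ) (p : ℝ) (x : Vertex d) : ℝ≥0∞ :=
  percMeasure d p {ω | Conn ω 0 x}

/-- The two-point function `τ_p(x) = ℙ_p(0 ↔ x)`, as a real number. -/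
noncomputable def tau (d : ℕ) (p : ℝ) (x : Vertex d) : ℝ := (tauE d p x).toReal

/-- The susceptibility `χ(p) = Σ_{x ∈ ℤ^d} τ_p(x) ∈ [0, ∞]`. -/
noncomputable def chi (d : ℕ) (p : ℝ) : ℝ≥0∞ := ∑' x : Vertex d, tauE d p x

/-- The critical point `p_c(d) = sup { p ∈ [0,1] : χ(p) < ∞ }`. -/
noncomputable def pc (d : ℕ) : ℝ := sSup {p : ℝ | p ∈ Set.Icc (0 : ℝ) 1 ∧ chi d p < ⊤}


/-- The Fourier transform `D̂(k) = d⁻¹ Σ_i cos kᵢ` of the simple random walk step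
distribution. -/
noncomputable def Dhat (d : ℕ) (k : Fin d → ℝ) : ℝ := (1 / (d : ℝ)) * ∑ i, Real.cos (k i)

/-- The inner product `k · x`. -/
def dot {d : ℕ} (k : Fin d → ℝ) (x : Vertex d) : ℝ := ∑ i, k i * (x i : ℝ)

/-- The Fourier transform `τ̂_p(k) = Σ_{x ∈ ℤ^d} τ_p(x) e^{i k · x}`, which is a real
number by the symmetry `τ_p(x) = τ_p(−x)`. -/
noncomputable def tauHat (d : ℕ) (p : ℝ) (k : Fin d → ℝ) : ℝ :=
  (∑' x : Vertex d, (tau d p x : ℂ) * Complex.exp (Complex.I * (dot k x : ℂ))).re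

/-- The non-backtracking condition for a sequence of steps: no step is immediately
followed by the reversed step. -/
def IsNB {d n : ℕ} (s : Fin n → Dir d) : Prop :=
  ∀ (i : ℕ) (h : i + 1 < n), s ⟨i + 1, h⟩ ≠ dirNeg (s ⟨i, Nat.lt_of_succ_lt h⟩)

/-- `b_n(x)`: the number of `n`-step non-backtracking nearest-neighbour walks from `0`
to `x`, encoded by their sequences of steps. -/
noncomputable def nbw (d n : ℕ) (x : Vertex d) : ℕ :=
  Nat.card {s : Fin n → Dir d // IsNB s ∧ (∑ i, dirVec (s i)) = x}

/-- `b^ι_n(x)`: as `nbw d n x`, with the additional requirement that the first position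
`ω₁` of the walk is not `e_ι`. -/
noncomputable def nbwA (d n : ℕ) (ι : Dir d) (x : Vertex d) : ℕ :=
  Nat.card {s : Fin n → Dir d //
    IsNB s ∧ (∀ h : 0 < n, s ⟨0, h⟩ ≠ ι) ∧ (∑ i, dirVec (s i)) = x}

section AuxNBW

open Finset

variable {d : ℕ}

lemma isNB_snoc {n : ℕ} (s : Fin (n+1) → Dir d) (ι : Dir d) :
    IsNB (Fin.snoc s ι : Fin (n+2) → Dir d) ↔ IsNB s ∧ ι ≠ dirNeg (s (Fin.last n)) := by
  constructor
  · intro h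
    refine ⟨fun i hi => ?_, ?_⟩
    · have h2 : i + 1 < n + 2 := Nat.lt_succ_of_lt hi
      have := h i h2
      have e1 : (⟨i+1, h2⟩ : Fin (n+2)) = Fin.castSucc ⟨i+1, hi⟩ := rfl
      have e2 : (⟨i, Nat.lt_of_succ_lt h2⟩ : Fin (n+2)) = Fin.castSucc ⟨i, Nat.lt_of_succ_lt hi⟩ := rfl
      rwa [e1, e2, Fin.snoc_castSucc, Fin.snoc_castSucc] at this
    · have h2 : n + 1 < n + 2 := Nat.lt_succ_self _
      have := h n h2
      have e1 : (⟨n+1, h2⟩ : Fin (n+2)) = Fin.last (n+1) := rfl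
      have e2 : (⟨n, Nat.lt_of_succ_lt h2⟩ : Fin (n+2)) = Fin.castSucc (Fin.last n) := rfl
      rwa [e1, e2, Fin.snoc_last, Fin.snoc_castSucc] at this
  · rintro ⟨h1, h2⟩ i hi
    rcases Nat.lt_or_ge (i+1) (n+1) with hlt | hge
    · have e1 : (⟨i+1, hi⟩ : Fin (n+2)) = Fin.castSucc ⟨i+1, hlt⟩ := rfl
      have e2 : (⟨i, Nat.lt_of_succ_lt hi⟩ : Fin (n+2)) =
          Fin.castSucc ⟨i, Nat.lt_of_succ_lt hlt⟩ := rfl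
      rw [e1, e2, Fin.snoc_castSucc, Fin.snoc_castSucc]
      exact h1 i hlt
    · have hin : i = n := by omega
      subst hin
      have e1 : (⟨i+1, hi⟩ : Fin (i+2)) = Fin.last (i+1) := rfl
      have e2 : (⟨i, Nat.lt_of_succ_lt hi⟩ : Fin (i+2)) = Fin.castSucc (Fin.last i) := rfl
      rw [e1, e2, Fin.snoc_last, Fin.snoc_castSucc]
      exact h2

noncomputable def NBset (d n : ℕ) : Finset (Fin n → Dir d) :=
  @Finset.filter _ (fun s => IsNB s) (Classical.decPred _) Finset.univ

lemma mem_NBset {n : ℕ} {s : Fin n → Dir d} : s ∈ NBset d n ↔ IsNB s := by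
  classical
  simp [NBset, Finset.mem_filter]

lemma sum_NBset_succ {M : Type*} [AddCommMonoid M] {n : ℕ} (G : (Fin (n+2) → Dir d) → M) :
    ∑ s ∈ NBset d (n+2), G s
      = ∑ s ∈ NBset d (n+1), ∑ ι ∈ Finset.univ.erase (dirNeg (s (Fin.last n))),
          G (Fin.snoc s ι) := by
  classical
  rw [← Finset.sum_sigma ((NBset d (n+1)) : Finset (Fin (n+1) → Dir d))
      (fun s => Finset.univ.erase (dirNeg (s (Fin.last n)))) (fun p => G (Fin.snoc p.1 p.2))]
  refine Finset.sum_nbij' (fun s => ⟨Fin.init s, s (Fin.last (n+1))⟩)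
    (fun p => Fin.snoc p.1 p.2) ?_ ?_ ?_ ?_ ?_
  · intro s hs
    rw [mem_NBset] at hs
    have := (isNB_snoc (Fin.init s) (s (Fin.last (n+1)))).1 (by rwa [Fin.snoc_init_self])
    simp only [Finset.mem_sigma, mem_NBset, Finset.mem_erase, Finset.mem_univ, and_true]
    exact ⟨this.1, this.2⟩
  · intro p hp
    simp only [Finset.mem_sigma, mem_NBset, Finset.mem_erase, Finset.mem_univ, and_true] at hp
    rw [mem_NBset, isNB_snoc]
    exact ⟨hp.1, hp.2⟩
  · intro s hs
    simp [Fin.init_snoc, Fin.snoc_last, Fin.snoc_init_self]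
  · intro p hp
    simp [Fin.init_snoc, Fin.snoc_last]
  · intro s hs
    rw [Fin.snoc_init_self]
noncomputable def wgt (k : Fin d → ℝ) (ι : Dir d) : ℂ :=
  Complex.exp (Complex.I * (dot k (dirVec ι) : ℂ))

lemma dirVec_dirNeg (ι : Dir d) : dirVec (dirNeg ι) = -dirVec ι := by
  obtain ⟨i, b⟩ := ι
  cases b <;> simp [dirVec, dirNeg, basis]

lemma dot_neg (k : Fin d → ℝ) (x : Vertex d) : dot k (-x) = - dot k x := by
  unfold dot
  rw [← Finset.sum_neg_distrib]
  apply Finset.sum_congr rfl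
  intro j _
  push_cast [Pi.neg_apply]
  ring

lemma wgt_mul_dirNeg (k : Fin d → ℝ) (ι : Dir d) : wgt k ι * wgt k (dirNeg ι) = 1 := by
  rw [wgt, wgt, dirVec_dirNeg, dot_neg, ← Complex.exp_add]
  push_cast
  ring_nf
  exact Complex.exp_zero

lemma norm_wgt (k : Fin d → ℝ) (ι : Dir d) : ‖wgt k ι‖ = 1 := by
  rw [wgt, mul_comm]
  exact Complex.norm_exp_ofReal_mul_I _

noncomputable def WS (d : ℕ) (k : Fin d → ℝ) (n : ℕ) : ℂ :=
  ∑ s ∈ NBset d n, ∏ i, wgt k (s i)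
noncomputable def WT (d : ℕ) (k : Fin d → ℝ) (n : ℕ) : ℂ :=
  ∑ s ∈ NBset d (n+1), (∏ i, wgt k (s i)) * wgt k (dirNeg (s (Fin.last n)))
noncomputable def cK (d : ℕ) (k : Fin d → ℝ) : ℂ := ∑ ι : Dir d, wgt k ι

lemma isNB_of_le_one {n : ℕ} (hn : n ≤ 1) (s : Fin n → Dir d) : IsNB s :=
  fun _ h => absurd h (by omega)

lemma NBset_eq_univ_of_le_one {n : ℕ} (hn : n ≤ 1) : NBset d n = Finset.univ := by
  ext s; simp [mem_NBset, isNB_of_le_one hn]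

lemma card_Dir : Fintype.card (Dir d) = 2 * d := by simp [mul_comm]

lemma WS_zero (k : Fin d → ℝ) : WS d k 0 = 1 := by
  rw [WS, NBset_eq_univ_of_le_one (by norm_num)]
  simp [Finset.card_univ]

lemma WS_one (k : Fin d → ℝ) : WS d k 1 = cK d k := by
  rw [WS, NBset_eq_univ_of_le_one le_rfl, cK]
  rw [← (Equiv.funUnique (Fin 1) (Dir d)).symm.sum_comp (fun s => ∏ i, wgt k (s i))]
  simp [Equiv.funUnique]

lemma WT_zero (k : Fin d → ℝ) : WT d k 0 = 2 * d := by
  rw [WT, NBset_eq_univ_of_le_one le_rfl]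
  have : ∀ s : Fin 1 → Dir d, (∏ i, wgt k (s i)) * wgt k (dirNeg (s (Fin.last 0))) = 1 := by
    intro s
    rw [Fin.prod_univ_one]
    exact wgt_mul_dirNeg k (s 0)
  rw [Finset.sum_congr rfl (fun s _ => this s), Finset.sum_const, Finset.card_univ]
  simp [card_Dir]
  ring

lemma WS_succ_succ (k : Fin d → ℝ) (n : ℕ) :
    WS d k (n+2) = cK d k * WS d k (n+1) - WT d k n := by
  classical
  rw [WS, sum_NBset_succ]
  have step : ∀ s ∈ NBset d (n+1),
      ∑ ι ∈ Finset.univ.erase (dirNeg (s (Fin.last n))),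
        (∏ i, wgt k ((Fin.snoc s ι : Fin (n+2) → Dir d) i))
      = (∏ i, wgt k (s i)) * (cK d k - wgt k (dirNeg (s (Fin.last n)))) := by
    intro s _
    have hprod : ∀ ι : Dir d, (∏ i, wgt k ((Fin.snoc s ι : Fin (n+2) → Dir d) i))
        = (∏ i, wgt k (s i)) * wgt k ι := by
      intro ι
      rw [Fin.prod_univ_castSucc]
      simp [Fin.snoc_castSucc, Fin.snoc_last]
    rw [Finset.sum_congr rfl (fun ι _ => hprod ι), ← Finset.mul_sum]
    congr 1
    rw [Finset.sum_erase_eq_sub (Finset.mem_univ _), cK]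
  rw [Finset.sum_congr rfl step]
  rw [WS, WT, Finset.mul_sum]
  rw [← Finset.sum_sub_distrib]
  congr 1; ext s; ring

lemma WT_succ (k : Fin d → ℝ) (n : ℕ) :
    WT d k (n+1) = (2 * (d:ℂ) - 1) * WS d k (n+1) := by
  classical
  rw [WT, sum_NBset_succ (fun s => (∏ i, wgt k (s i)) * wgt k (dirNeg (s (Fin.last (n+1)))))]
  have step : ∀ s ∈ NBset d (n+1),
      ∑ ι ∈ Finset.univ.erase (dirNeg (s (Fin.last n))),
        ((∏ i, wgt k ((Fin.snoc s ι : Fin (n+2) → Dir d) i)) *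
          wgt k (dirNeg ((Fin.snoc s ι : Fin (n+2) → Dir d) (Fin.last (n+1)))))
      = (2 * (d:ℂ) - 1) * ∏ i, wgt k (s i) := by
    intro s _
    have hterm : ∀ ι : Dir d,
        (∏ i, wgt k ((Fin.snoc s ι : Fin (n+2) → Dir d) i)) *
          wgt k (dirNeg ((Fin.snoc s ι : Fin (n+2) → Dir d) (Fin.last (n+1))))
        = ∏ i, wgt k (s i) := by
      intro ι
      rw [Fin.prod_univ_castSucc]
      simp only [Fin.snoc_castSucc, Fin.snoc_last]
      rw [mul_assoc, wgt_mul_dirNeg, mul_one]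
    rw [Finset.sum_congr rfl (fun ι _ => hterm ι), Finset.sum_const]
    rw [Finset.card_erase_of_mem (Finset.mem_univ _), Finset.card_univ, card_Dir]
    rw [nsmul_eq_mul]
    congr 1
    have hd0 : 0 < d := Fin.pos (s (Fin.last n)).1
    have hd1 : 1 ≤ 2 * d := by omega
    push_cast [Nat.cast_sub hd1]
    ring
  rw [Finset.sum_congr rfl step, ← Finset.mul_sum, WS]
lemma dot_basis (k : Fin d → ℝ) (i : Fin d) : dot k (basis i) = k i := by
  unfold dot basis
  rw [Finset.sum_eq_single i] <;> simp +contextual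

lemma cK_eq (k : Fin d → ℝ) : cK d k = 2 * ∑ i, (Real.cos (k i) : ℂ) := by
  rw [cK, Fintype.sum_prod_type, Finset.mul_sum]
  apply Finset.sum_congr rfl
  intro i _
  rw [Fintype.sum_bool]
  have h1 : dot k (dirVec (i, true)) = k i := by rw [show dirVec (i, true) = basis i from rfl, dot_basis]
  have h2 : dot k (dirVec (i, false)) = -(k i) := by
    have : dirVec (i, false) = -basis i := rfl
    rw [this, dot_neg, dot_basis]
  rw [wgt, wgt, h1, h2, Complex.ofReal_cos, Complex.cos]
  push_cast
  ring_nf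

lemma cK_eq_Dhat (hd : 1 ≤ d) (k : Fin d → ℝ) : cK d k = 2 * (d : ℂ) * (Dhat d k : ℝ) := by
  rw [cK_eq, Dhat]
  have hd0 : (d : ℂ) ≠ 0 := Nat.cast_ne_zero.2 (by omega)
  push_cast
  field_simp

lemma card_NBset_one : (NBset d 1).card = 2 * d := by
  rw [NBset_eq_univ_of_le_one le_rfl, Finset.card_univ]
  simp [card_Dir, mul_comm]

lemma card_NBset_succ_succ (n : ℕ) :
    (NBset d (n+2)).card = (2 * d - 1) * (NBset d (n+1)).card := by
  classical
  have := sum_NBset_succ (d := d) (n := n) (fun _ => (1 : ℕ))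
  simp only [Finset.sum_const, smul_eq_mul, mul_one] at this
  rw [this]
  have h2 : ∀ s ∈ NBset d (n+1),
      (Finset.univ.erase (dirNeg (s (Fin.last n)))).card = 2 * d - 1 := by
    intro s _
    rw [Finset.card_erase_of_mem (Finset.mem_univ _), Finset.card_univ, card_Dir]
  rw [Finset.sum_congr rfl h2, Finset.sum_const, smul_eq_mul, mul_comm]

lemma card_NBset_succ_eq (hd : 1 ≤ d) (n : ℕ) :
    (NBset d (n+1)).card = 2 * d * (2 * d - 1) ^ n := by
  induction n with
  | zero => simpa using card_NBset_one
  | succ m ih => rw [card_NBset_succ_succ, ih, pow_succ]; ring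

lemma card_NBset_le (hd : 1 ≤ d) (n : ℕ) :
    (NBset d n).card ≤ 2 * d * (2 * d - 1) ^ n := by
  cases n with
  | zero =>
    rw [pow_zero, mul_one, NBset_eq_univ_of_le_one (by norm_num), Finset.card_univ]
    have : Fintype.card (Fin 0 → Dir d) = 1 := by simp
    omega
  | succ m =>
    rw [card_NBset_succ_eq hd]
    have h1 : 1 ≤ 2 * d - 1 := by omega
    exact Nat.mul_le_mul_left _ (Nat.pow_le_pow_right h1 (by omega))

-- endpoint and nbw
def endp {n : ℕ} (s : Fin n → Dir d) : Vertex d := ∑ i, dirVec (s i)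

lemma nbw_eq_card (n : ℕ) (x : Vertex d) :
    nbw d n x = ((NBset d n).filter (fun s => endp s = x)).card := by
  classical
  rw [nbw, Nat.card_eq_fintype_card, Fintype.card_subtype]
  congr 1
  ext s
  rw [Finset.mem_filter, Finset.mem_filter, mem_NBset]
  simp [endp]

lemma nbw_eq_zero_of_not_mem (n : ℕ) (x : Vertex d)
    (hx : x ∉ (NBset d n).image endp) : nbw d n x = 0 := by
  rw [nbw_eq_card, Finset.card_eq_zero, Finset.filter_eq_empty_iff]
  intro s hs hex
  exact hx (Finset.mem_image.2 ⟨s, hs, hex⟩)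

lemma tsum_nbw_smul {M : Type*} [AddCommMonoid M] [TopologicalSpace M] (n : ℕ)
    (g : Vertex d → M) :
    ∑' x : Vertex d, (nbw d n x) • g x = ∑ s ∈ NBset d n, g (endp s) := by
  classical
  rw [tsum_eq_sum (s := (NBset d n).image endp)
    (fun x hx => by rw [nbw_eq_zero_of_not_mem n x hx, zero_smul])]
  rw [Finset.sum_comp g endp]
  apply Finset.sum_congr rfl
  intro x _
  rw [nbw_eq_card]
lemma dot_endp (k : Fin d → ℝ) {n : ℕ} (s : Fin n → Dir d) :
    dot k (endp s) = ∑ i, dot k (dirVec (s i)) := by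
  unfold dot endp
  rw [Finset.sum_comm]
  apply Finset.sum_congr rfl
  intro j _
  rw [← Finset.mul_sum]
  congr 1
  rw [Finset.sum_apply]
  push_cast
  rfl

lemma exp_dot_endp (k : Fin d → ℝ) {n : ℕ} (s : Fin n → Dir d) :
    Complex.exp (Complex.I * (dot k (endp s) : ℂ)) = ∏ i, wgt k (s i) := by
  rw [dot_endp, Complex.ofReal_sum, Finset.mul_sum, Complex.exp_sum]
  rfl

end AuxNBW

attribute [irreducible] WS NBset wgt cK

set_option maxHeartbeats 1000000 in
/-- **Closed form of the non-backtracking walk generating function** (equation (2.16)). -/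
theorem nbw_generating_function (d : ℕ) (hd : 1 ≤ d) (z : ℂ)
    (hz : ‖z‖ < 1 / (2 * (d : ℝ) - 1)) (k : Fin d → ℝ) :
    Summable (fun q : Vertex d × ℕ =>
        ‖(nbw d q.2 q.1 : ℂ) * z ^ q.2 * Complex.exp (Complex.I * (dot k q.1 : ℂ))‖) ∧
      ((1 : ℂ) + (2 * (d : ℂ) - 1) * z ^ 2 - 2 * (d : ℂ) * z * (Dhat d k : ℂ)) ≠ 0 ∧
      (∑' x : Vertex d, ∑' n : ℕ,
          (nbw d n x : ℂ) * z ^ n * Complex.exp (Complex.I * (dot k x : ℂ))) =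
        (1 - z ^ 2) /
          ((1 : ℂ) + (2 * (d : ℂ) - 1) * z ^ 2 - 2 * (d : ℂ) * z * (Dhat d k : ℂ)) := by
  classical
  have hd0 : (0:ℝ) < 2 * (d:ℝ) - 1 := by
    have : (1:ℝ) ≤ (d:ℝ) := by exact_mod_cast hd
    linarith
  have hr1 : (2 * (d:ℝ) - 1) * ‖z‖ < 1 := by
    rw [mul_comm]
    calc ‖z‖ * (2 * (d:ℝ) - 1) < (1 / (2 * (d:ℝ) - 1)) * (2 * (d:ℝ) - 1) := by
          exact mul_lt_mul_of_pos_right hz hd0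
      _ = 1 := by field_simp
  have hr0 : (0:ℝ) ≤ (2 * (d:ℝ) - 1) * ‖z‖ := mul_nonneg hd0.le (norm_nonneg z)
  have hgeo : Summable (fun n : ℕ => (2 * (d:ℝ)) * ((2 * (d:ℝ) - 1) * ‖z‖) ^ n) :=
    (summable_geometric_of_lt_one hr0 hr1).mul_left _
  have hcard : ∀ n : ℕ, ((NBset d n).card : ℝ) ≤ 2 * (d:ℝ) * (2 * (d:ℝ) - 1) ^ n := by
    intro n
    have := card_NBset_le (d := d) hd n
    calc ((NBset d n).card : ℝ) ≤ ((2 * d * (2 * d - 1) ^ n : ℕ) : ℝ) := by exact_mod_cast this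
      _ = 2 * (d:ℝ) * (2 * (d:ℝ) - 1) ^ n := by
          push_cast [Nat.cast_sub (show 1 ≤ 2 * d by omega)]
          ring
  have hbound : ∀ n : ℕ, ((NBset d n).card : ℝ) * ‖z‖ ^ n
      ≤ (2 * (d:ℝ)) * ((2 * (d:ℝ) - 1) * ‖z‖) ^ n := by
    intro n
    rw [mul_pow, ← mul_assoc]
    exact mul_le_mul_of_nonneg_right (hcard n) (pow_nonneg (norm_nonneg z) n)
  have hnormterm : ∀ (x : Vertex d) (n : ℕ),
      ‖(nbw d n x : ℂ) * z ^ n * Complex.exp (Complex.I * (dot k x : ℂ))‖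
        = (nbw d n x : ℝ) * ‖z‖ ^ n := by
    intro x n
    have he : ‖Complex.exp ((dot k x : ℂ) * Complex.I)‖ = 1 := by
      exact Complex.norm_exp_ofReal_mul_I _
    rw [norm_mul, norm_mul, norm_pow, mul_comm Complex.I, he, mul_one]
    norm_num
  have hsum_x_norm : ∀ n : ℕ, Summable (fun x : Vertex d => (nbw d n x : ℝ) * ‖z‖ ^ n) := by
    intro n
    apply summable_of_ne_finset_zero (s := (NBset d n).image endp)
    intro x hx
    rw [nbw_eq_zero_of_not_mem n x hx]
    simp
  have htsum_x_norm : ∀ n : ℕ,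
      (∑' x : Vertex d, (nbw d n x : ℝ) * ‖z‖ ^ n) = ((NBset d n).card : ℝ) * ‖z‖ ^ n := by
    intro n
    calc (∑' x : Vertex d, (nbw d n x : ℝ) * ‖z‖ ^ n)
        = ∑' x : Vertex d, (nbw d n x) • (‖z‖ ^ n) := by
          apply tsum_congr; intro x; rw [nsmul_eq_mul]
      _ = ∑ _s ∈ NBset d n, ‖z‖ ^ n := tsum_nbw_smul n _
      _ = ((NBset d n).card : ℝ) * ‖z‖ ^ n := by rw [Finset.sum_const, nsmul_eq_mul]
  have hF2 : Summable (fun p : ℕ × Vertex d => (nbw d p.1 p.2 : ℝ) * ‖z‖ ^ p.1) := by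
    rw [summable_prod_of_nonneg (by
      intro p
      exact mul_nonneg (Nat.cast_nonneg _) (pow_nonneg (norm_nonneg z) _))]
    refine ⟨fun n => hsum_x_norm n, ?_⟩
    apply Summable.of_nonneg_of_le (fun n => tsum_nonneg (fun x =>
      mul_nonneg (Nat.cast_nonneg _) (pow_nonneg (norm_nonneg z) _))) _ hgeo
    intro n
    rw [htsum_x_norm n]
    exact hbound n
  have hSummableNorm : Summable (fun q : Vertex d × ℕ =>
      ‖(nbw d q.2 q.1 : ℂ) * z ^ q.2 * Complex.exp (Complex.I * (dot k q.1 : ℂ))‖) := by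
    have h1 : Summable ((fun p : ℕ × Vertex d => (nbw d p.1 p.2 : ℝ) * ‖z‖ ^ p.1)
        ∘ (Equiv.prodComm (Vertex d) ℕ)) := (Equiv.prodComm (Vertex d) ℕ).summable_iff.2 hF2
    exact h1.congr (fun q => (hnormterm q.1 q.2).symm)
  have hSummable : Summable (fun q : Vertex d × ℕ =>
      (nbw d q.2 q.1 : ℂ) * z ^ q.2 * Complex.exp (Complex.I * (dot k q.1 : ℂ))) :=
    hSummableNorm.of_norm
  -- value of the x-slices
  have htsum_x : ∀ n : ℕ,
      (∑' x : Vertex d, (nbw d n x : ℂ) * z ^ n * Complex.exp (Complex.I * (dot k x : ℂ)))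
        = z ^ n * WS d k n := by
    intro n
    calc (∑' x : Vertex d, (nbw d n x : ℂ) * z ^ n * Complex.exp (Complex.I * (dot k x : ℂ)))
        = ∑' x : Vertex d, (nbw d n x) •
            (z ^ n * Complex.exp (Complex.I * (dot k x : ℂ))) := by
          apply tsum_congr; intro x; rw [nsmul_eq_mul]; ring
      _ = ∑ s ∈ NBset d n, z ^ n * Complex.exp (Complex.I * (dot k (endp s) : ℂ)) :=
          tsum_nbw_smul n _
      _ = z ^ n * WS d k n := by
          rw [← Finset.mul_sum, WS]
          congr 1
          exact Finset.sum_congr rfl (fun s _ => exp_dot_endp k s)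
  -- the series a n = z^n * WS n
  have hWSnorm : ∀ n : ℕ, ‖WS d k n‖ ≤ ((NBset d n).card : ℝ) := by
    intro n
    rw [WS]
    refine (norm_sum_le _ _).trans ?_
    have : ∀ s ∈ NBset d n, ‖∏ i, wgt k (s i)‖ = 1 := by
      intro s _
      rw [norm_prod]
      exact Finset.prod_eq_one (fun i _ => by
        rw [wgt, mul_comm]; exact Complex.norm_exp_ofReal_mul_I _)
    rw [Finset.sum_congr rfl this, Finset.sum_const, nsmul_eq_mul, mul_one]
  have ha : Summable (fun n : ℕ => z ^ n * WS d k n) := by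
    apply Summable.of_norm_bounded hgeo
    intro n
    rw [norm_mul, norm_pow]
    calc ‖z‖ ^ n * ‖WS d k n‖ ≤ ‖z‖ ^ n * ((NBset d n).card : ℝ) :=
          mul_le_mul_of_nonneg_left (hWSnorm n) (pow_nonneg (norm_nonneg z) n)
      _ = ((NBset d n).card : ℝ) * ‖z‖ ^ n := by ring
      _ ≤ _ := hbound n
  -- recursion
  have hrec : ∀ n : ℕ, WS d k (n+2)
      = cK d k * WS d k (n+1) - (2*(d:ℂ)-1) * WS d k n - (if n = 0 then 1 else 0) := by
    intro n
    cases n with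
    | zero =>
      rw [WS_succ_succ, WT_zero, WS_zero, if_pos rfl]
      ring
    | succ m =>
      rw [WS_succ_succ, WT_succ, if_neg (Nat.succ_ne_zero m)]
      ring
  -- the key identity
  have key : ((1 : ℂ) + (2 * (d : ℂ) - 1) * z ^ 2 - 2 * (d : ℂ) * z * (Dhat d k : ℂ))
      * (∑' n : ℕ, z ^ n * WS d k n) = 1 - z ^ 2 := by
    have hc : 2 * (d:ℂ) * z * (Dhat d k : ℂ) = cK d k * z := by
      rw [cK_eq_Dhat hd]; ring
    rw [hc]
    have s1 : Summable (fun n : ℕ => z ^ (n+1) * WS d k (n+1)) :=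
      (summable_nat_add_iff 1).2 ha
    have s2 : Summable (fun n : ℕ => z ^ (n+2) * WS d k (n+2)) :=
      (summable_nat_add_iff 2).2 ha
    have sB : Summable (fun n : ℕ => (2*(d:ℂ)-1) * z^2 * (z ^ n * WS d k n)) := ha.mul_left _
    have sC : Summable (fun n : ℕ => cK d k * z * (z ^ (n+1) * WS d k (n+1))) := s1.mul_left _
    have e1 : ((1:ℂ) + (2 * (d : ℂ) - 1) * z ^ 2 - cK d k * z) * (∑' n : ℕ, z ^ n * WS d k n)
        = (∑' n : ℕ, z ^ n * WS d k n)
          + (∑' n : ℕ, (2*(d:ℂ)-1) * z^2 * (z ^ n * WS d k n))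
          - (∑' n : ℕ, cK d k * z * (z ^ n * WS d k n)) := by
      rw [tsum_mul_left, tsum_mul_left]
      ring
    rw [e1]
    have hA : (∑' n : ℕ, z ^ n * WS d k n)
        = z ^ 0 * WS d k 0 + (z ^ 1 * WS d k 1 + ∑' n : ℕ, z ^ (n+2) * WS d k (n+2)) := by
      rw [ha.tsum_eq_zero_add, s1.tsum_eq_zero_add]
    have hC : (∑' n : ℕ, cK d k * z * (z ^ n * WS d k n))
        = cK d k * z * (z ^ 0 * WS d k 0)
          + ∑' n : ℕ, cK d k * z * (z ^ (n+1) * WS d k (n+1)) :=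
      (ha.mul_left _).tsum_eq_zero_add
    rw [hA, hC, WS_zero, WS_one]
    have hcomb : (∑' n : ℕ, z ^ (n+2) * WS d k (n+2))
        + (∑' n : ℕ, (2*(d:ℂ)-1) * z^2 * (z ^ n * WS d k n))
        - (∑' n : ℕ, cK d k * z * (z ^ (n+1) * WS d k (n+1)))
        = ∑' n : ℕ, (z ^ (n+2) * WS d k (n+2) + (2*(d:ℂ)-1) * z^2 * (z ^ n * WS d k n)
            - cK d k * z * (z ^ (n+1) * WS d k (n+1))) := by
      rw [← s2.tsum_add sB, ← (s2.add sB).tsum_sub sC]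
    have hterm : ∀ n : ℕ, (z ^ (n+2) * WS d k (n+2) + (2*(d:ℂ)-1) * z^2 * (z ^ n * WS d k n)
        - cK d k * z * (z ^ (n+1) * WS d k (n+1)))
        = if n = 0 then -z^2 else 0 := by
      intro n
      rw [hrec n]
      by_cases h0 : n = 0
      · subst h0
        rw [if_pos rfl, if_pos rfl]
        ring
      · rw [if_neg h0, if_neg h0]
        ring
    rw [tsum_congr hterm, tsum_eq_single 0 (fun b hb => if_neg hb), if_pos rfl] at hcomb
    linear_combination hcomb
  have hz1 : ‖z‖ < 1 := by
    calc ‖z‖ < 1 / (2 * (d:ℝ) - 1) := hz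
      _ ≤ 1 := by
        rw [div_le_one hd0]
        have : (1:ℝ) ≤ (d:ℝ) := by exact_mod_cast hd
        linarith
  have hz2 : (1:ℂ) - z ^ 2 ≠ 0 := by
    intro h
    have h1 : z ^ 2 = 1 := by linear_combination -h
    have : ‖z ^ 2‖ < 1 := by
      rw [norm_pow]
      exact pow_lt_one₀ (norm_nonneg z) hz1 (by norm_num)
    rw [h1, norm_one] at this
    exact lt_irrefl _ this
  have hDne : ((1 : ℂ) + (2 * (d : ℂ) - 1) * z ^ 2 - 2 * (d : ℂ) * z * (Dhat d k : ℂ)) ≠ 0 := by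
    intro h
    apply hz2
    rw [← key, h, zero_mul]
  refine ⟨hSummableNorm, hDne, ?_⟩
  have hSwapped : Summable (fun p : ℕ × Vertex d =>
      (nbw d p.1 p.2 : ℂ) * z ^ p.1 * Complex.exp (Complex.I * (dot k p.2 : ℂ))) := by
    have := (Equiv.prodComm ℕ (Vertex d)).summable_iff.2 hSummable
    exact this.congr (fun p => rfl)
  have hswap : (∑' x : Vertex d, ∑' n : ℕ,
      (nbw d n x : ℂ) * z ^ n * Complex.exp (Complex.I * (dot k x : ℂ)))
      = ∑' n : ℕ, z ^ n * WS d k n := by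
    calc (∑' x : Vertex d, ∑' n : ℕ,
        (nbw d n x : ℂ) * z ^ n * Complex.exp (Complex.I * (dot k x : ℂ)))
        = ∑' q : Vertex d × ℕ,
            (nbw d q.2 q.1 : ℂ) * z ^ q.2 * Complex.exp (Complex.I * (dot k q.1 : ℂ)) :=
          (hSummable.tsum_prod' (fun x => hSummable.prod_factor x)).symm
      _ = ∑' p : ℕ × Vertex d,
            (nbw d p.1 p.2 : ℂ) * z ^ p.1 * Complex.exp (Complex.I * (dot k p.2 : ℂ)) := by
          rw [← Equiv.tsum_eq (Equiv.prodComm ℕ (Vertex d))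
            (f := fun q : Vertex d × ℕ =>
              (nbw d q.2 q.1 : ℂ) * z ^ q.2 * Complex.exp (Complex.I * (dot k q.1 : ℂ)))]
          exact tsum_congr (fun p => rfl)
      _ = ∑' n : ℕ, ∑' x : Vertex d,
            (nbw d n x : ℂ) * z ^ n * Complex.exp (Complex.I * (dot k x : ℂ)) :=
          hSwapped.tsum_prod' (fun n => hSwapped.prod_factor n)
      _ = ∑' n : ℕ, z ^ n * WS d k n := tsum_congr htsum_x
  rw [hswap, eq_div_iff hDne, mul_comm]
  exact key

end NoBLE
end

section
/- Cutting lemma (Lemma 3.2): Let d ≥ 2, 0 ≤ p < p_c(d), x, y ∈ ℤ^d, A ⊆ ℤ^d, and let b = (b̲, b̄) be a directed nearest-neighbor bond. Let ω₀ and ω₁ be two independent bond configurations, each distributed according to ℙ_p. Then ℙ_p(E(x, b, y; A)) = p · 𝔼₀[ 1{E'(x, b̲; A) occurs in ω₀} · 1{b̄ ∉ C̃^b(x) evaluated in ω₀} · ℙ₁( b̄ ↔ y off C̃^b(x) evaluated in ω₀ ) ], where the inner probability ℙ₁ refers to the configuration ω₁ with the set C̃^b(x) from ω₀ treated as a fixed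 (deterministic) vertex set, and the outer expectation 𝔼₀ is over ω₀. -/
open MeasureTheory Filter
open scoped ENNReal

namespace NoBLE

/-- The (ordered) pairs `(a,b)` and `(u,v)` span the same undirected edge. -/
def SameEdge {d : ℕ} (a b u v : Vertex d) : Prop := (a = u ∧ b = v) ∨ (a = v ∧ b = u)

/-- `γ` is an `n`-step walk of occupied bonds from `x` to `y`. -/
def OccWalk {d n : ℕ} (ω : Config d) (γ : Fin (n + 1) → Vertex d) (x y : Vertex d) : Prop :=
  γ 0 = x ∧ γ (Fin.last n) = y ∧ ∀ i : Fin n, Occ ω (γ i.castSucc) (γ i.succ)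

/-- The bonds used by the walk `γ` are pairwise distinct. -/
def DistinctBonds {d n : ℕ} (γ : Fin (n + 1) → Vertex d) : Prop :=
  ∀ i j : Fin n, i ≠ j → ¬ SameEdge (γ i.castSucc) (γ i.succ) (γ j.castSucc) (γ j.succ)

/-- Occupation of the edge `{a,c}` avoiding the undirected edge `{u,v}`. -/
def OccAvoid {d : ℕ} (ω : Config d) (u v a c : Vertex d) : Prop :=
  Occ ω a c ∧ ¬ SameEdge a c u v

/-- `C̃^{{u,v}}(x)`: the set of vertices connected to `x` in the configuration in which
the bond `{u,v}` is made vacant. -/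
def tildeC {d : ℕ} (ω : Config d) (u v x : Vertex d) : Set (Vertex d) :=
  {y | Relation.ReflTransGen (OccAvoid ω u v) x y}

/-- Occupation of the edge `{a,c}` off the vertex set `A` (no endpoint lies in `A`). -/
def OccOff {d : ℕ} (ω : Config d) (A : Set (Vertex d)) (a c : Vertex d) : Prop :=
  Occ ω a c ∧ a ∉ A ∧ c ∉ A

/-- `x ↔ y off A`: connected by a path of occupied bonds having no endpoint in `A`. -/
def ConnOff {d : ℕ} (ω : Config d) (A : Set (Vertex d)) (x y : Vertex d) : Prop :=
  Relation.ReflTransGen (OccOff ω A) x y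

/-- `x ↔_A y`: `x` and `y` are connected and every occupied path from `x` to `y` uses a
bond with an endpoint in `A` (by convention, `x ↔_A x` iff `x ∈ A`). -/
def ConnThrough {d : ℕ} (ω : Config d) (A : Set (Vertex d)) (x y : Vertex d) : Prop :=
  (x = y ∧ x ∈ A) ∨ (x ≠ y ∧ Conn ω x y ∧ ¬ ConnOff ω A x y)

/-- The directed bond `(u,v)` is pivotal for `x ↔ y`. -/
def Pivotal {d : ℕ} (ω : Config d) (u v x y : Vertex d) : Prop :=
  Conn ω x u ∧ Conn ω v y ∧ y ∉ tildeC ω u v x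

/-- The event `E'(v, y; A)`: `v ↔_A y` and there is no occupied directed bond pivotal for
`v ↔ y` whose bottom is reached from `v` through `A`. -/
def Eprime {d : ℕ} (ω : Config d) (v y : Vertex d) (A : Set (Vertex d)) : Prop :=
  ConnThrough ω A v y ∧
    ¬ ∃ a b : Vertex d, Occ ω a b ∧ Pivotal ω a b v y ∧ ConnThrough ω A v a

/-- The event `E(x, b, y; A)` for the directed bond `b = (u, v)`. -/
def Eev {d : ℕ} (ω : Config d) (x u v y : Vertex d) (A : Set (Vertex d)) : Prop :=
  Eprime ω x u A ∧ Occ ω u v ∧ Pivotal ω u v x y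

/-! ### Auxiliary development for the cutting lemma -/

theorem rtgMono {α : Type*} {r p : α → α → Prop} {a b : α}
    (h : ∀ a b, r a b → p a b) (hr : Relation.ReflTransGen r a b) :
    Relation.ReflTransGen p a b := by
  induction hr with
  | refl => exact .refl
  | tail _ hs ih => exact ih.tail (h _ _ hs)

section CuttingAux

variable {d : ℕ}

/-- The second endpoint of a bond. -/
def bsnd (b : Bond d) : Vertex d := b.1 + basis b.2

/-- The bond `β` has endpoints `{u, v}`. -/
def EdgeIs (β : Bond d) (u v : Vertex d) : Prop :=
  (β.1 = u ∧ bsnd β = v) ∨ (β.1 = v ∧ bsnd β = u)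

/-- Bonds having at least one endpoint in `S`. -/
def BS (S : Set (Vertex d)) : Set (Bond d) := {b | b.1 ∈ S ∨ bsnd b ∈ S}

open scoped Classical in
/-- The configuration `ω` with all bonds not having both endpoints in `S` made vacant. -/
noncomputable def restrictS (ω : Config d) (S : Set (Vertex d)) : Config d :=
  fun b => if b.1 ∈ S ∧ bsnd b ∈ S then ω b else false

lemma occ_symm {ω : Config d} {a c : Vertex d} (h : Occ ω a c) : Occ ω c a := by
  rcases h with ⟨i, h1, h2⟩ | ⟨i, h1, h2⟩
  · exact Or.inr ⟨i, h1, h2⟩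
  · exact Or.inl ⟨i, h1, h2⟩

lemma sameEdge_symm {a c u v : Vertex d} (h : SameEdge a c u v) : SameEdge c a u v := by
  rcases h with ⟨h1, h2⟩ | ⟨h1, h2⟩
  · exact Or.inr ⟨h2, h1⟩
  · exact Or.inl ⟨h2, h1⟩

lemma conn_symm {ω : Config d} {a c : Vertex d} (h : Conn ω a c) : Conn ω c a :=
  by
    haveI : Std.Symm (Occ ω) := ⟨fun _ _ hh => occ_symm hh⟩
    exact symm_of (Relation.ReflTransGen (Occ ω)) h

lemma basis_add_basis_ne_zero (i j : Fin d) : basis i + basis j ≠ (0 : Vertex d) := by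
  intro h
  have h' := congrFun h i
  simp only [Pi.add_apply, Pi.zero_apply, basis] at h'
  split_ifs at h' <;> omega

lemma basis_inj {i j : Fin d} (h : basis (d := d) i = basis j) : i = j := by
  by_contra hne
  have h' := congrFun h i
  simp only [basis, if_pos rfl] at h'
  rw [if_neg (fun hh : i = j => hne hh)] at h'
  exact one_ne_zero h'

lemma edgeIs_unique {β β' : Bond d} {u v : Vertex d}
    (h1 : EdgeIs β u v) (h2 : EdgeIs β' u v) : β = β' := by
  obtain ⟨b1, b2⟩ := β
  obtain ⟨c1, c2⟩ := β'
  simp only [EdgeIs, bsnd] at h1 h2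
  rcases h1 with ⟨e1, e2⟩ | ⟨e1, e2⟩ <;> rcases h2 with ⟨f1, f2⟩ | ⟨f1, f2⟩
  · subst e1 f1
    have : basis b2 = basis c2 := by
      have := e2.trans f2.symm
      exact add_left_cancel this
    rw [basis_inj this]
  · exfalso
    apply basis_add_basis_ne_zero b2 c2
    have h3 : b1 + (basis b2 + basis c2) = b1 := by
      rw [← add_assoc, e2, ← f1, f2, e1]
    exact add_eq_left.mp h3
  · exfalso
    apply basis_add_basis_ne_zero b2 c2
    have h3 : b1 + (basis b2 + basis c2) = b1 := by
      rw [← add_assoc, e2, ← f1, f2, e1]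
    exact add_eq_left.mp h3
  · subst e1 f1
    have : basis b2 = basis c2 := add_left_cancel (e2.trans f2.symm)
    rw [basis_inj this]

lemma sameEdge_of_edgeIs {β : Bond d} {a c u v : Vertex d}
    (h1 : EdgeIs β a c) (h2 : EdgeIs β u v) : SameEdge a c u v := by
  rcases h1 with ⟨e1, e2⟩ | ⟨e1, e2⟩ <;> rcases h2 with ⟨f1, f2⟩ | ⟨f1, f2⟩
  · exact Or.inl ⟨e1 ▸ f1, e2 ▸ f2⟩
  · exact Or.inr ⟨e1 ▸ f1, e2 ▸ f2⟩
  · exact Or.inr ⟨e2 ▸ f2, e1 ▸ f1⟩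
  · exact Or.inl ⟨e2 ▸ f2, e1 ▸ f1⟩

lemma occ_read {ω : Config d} {a c : Vertex d} :
    Occ ω a c ↔ ∃ β : Bond d, EdgeIs β a c ∧ ω β = true := by
  constructor
  · rintro (⟨i, h1, h2⟩ | ⟨i, h1, h2⟩)
    · exact ⟨(a, i), Or.inl ⟨rfl, h1.symm⟩, h2⟩
    · exact ⟨(c, i), Or.inr ⟨rfl, h1.symm⟩, h2⟩
  · rintro ⟨⟨b1, b2⟩, ⟨h1, h2⟩ | ⟨h1, h2⟩, hb⟩
    · left; exact ⟨b2, by simp only [bsnd] at h2; rw [← h1, h2], by rw [← h1]; exact hb⟩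
    · right; exact ⟨b2, by simp only [bsnd] at h2; rw [← h1, h2], by rw [← h1]; exact hb⟩

lemma occ_iff_coord {ω : Config d} {β : Bond d} {u v : Vertex d} (hβ : EdgeIs β u v) :
    Occ ω u v ↔ ω β = true := by
  rw [occ_read]
  constructor
  · rintro ⟨β', hβ', hb⟩
    rwa [edgeIs_unique hβ hβ'] 
  · exact fun h => ⟨β, hβ, h⟩

lemma occ_update {ω : Config d} {β : Bond d} {u v a c : Vertex d} (hβ : EdgeIs β u v)
    (hne : ¬ SameEdge a c u v) (t : Bool) :
    Occ (Function.update ω β t) a c ↔ Occ ω a c := by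
  rw [occ_read, occ_read]
  have key : ∀ β' : Bond d, EdgeIs β' a c → β' ≠ β := by
    intro β' hβ' h
    exact hne (sameEdge_of_edgeIs (h ▸ hβ') hβ)
  constructor
  · rintro ⟨β', hβ', hb⟩
    exact ⟨β', hβ', by rwa [Function.update_of_ne (key β' hβ')] at hb⟩
  · rintro ⟨β', hβ', hb⟩
    exact ⟨β', hβ', by rwa [Function.update_of_ne (key β' hβ')]⟩

lemma occ_congr_on {ω ω' : Config d} {S : Set (Vertex d)} {a c : Vertex d}
    (hag : ∀ b ∈ BS S, ω b = ω' b) (h : a ∈ S ∨ c ∈ S) : Occ ω a c ↔ Occ ω' a c := by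
  rw [occ_read, occ_read]
  have key : ∀ β : Bond d, EdgeIs β a c → β ∈ BS S := by
    rintro β (⟨h1, h2⟩ | ⟨h1, h2⟩)
    · rcases h with h | h
      · exact Or.inl (h1 ▸ h)
      · exact Or.inr (h2 ▸ h)
    · rcases h with h | h
      · exact Or.inr (h2 ▸ h)
      · exact Or.inl (h1 ▸ h)
  constructor
  · rintro ⟨β, hβ, hb⟩; exact ⟨β, hβ, (hag β (key β hβ)) ▸ hb⟩
  · rintro ⟨β, hβ, hb⟩; exact ⟨β, hβ, (hag β (key β hβ)).symm ▸ hb⟩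

lemma occ_congr_off {ω ω' : Config d} {S : Set (Vertex d)} {a c : Vertex d}
    (hag : ∀ b ∉ BS S, ω b = ω' b) (ha : a ∉ S) (hc : c ∉ S) : Occ ω a c ↔ Occ ω' a c := by
  rw [occ_read, occ_read]
  have key : ∀ β : Bond d, EdgeIs β a c → β ∉ BS S := by
    rintro β (⟨h1, h2⟩ | ⟨h1, h2⟩) (hm | hm)
    · exact ha (h1 ▸ hm)
    · exact hc (h2 ▸ hm)
    · exact hc (h1 ▸ hm)
    · exact ha (h2 ▸ hm)
  constructor
  · rintro ⟨β, hβ, hb⟩; exact ⟨β, hβ, (hag β (key β hβ)) ▸ hb⟩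
  · rintro ⟨β, hβ, hb⟩; exact ⟨β, hβ, (hag β (key β hβ)).symm ▸ hb⟩

lemma occ_mono {ω ω' : Config d} {a c : Vertex d}
    (hle : ∀ b, ω b = true → ω' b = true) (h : Occ ω a c) : Occ ω' a c := by
  rw [occ_read] at h ⊢
  obtain ⟨β, hβ, hb⟩ := h
  exact ⟨β, hβ, hle β hb⟩

lemma restrictS_le (ω : Config d) (S : Set (Vertex d)) :
    ∀ b, restrictS ω S b = true → ω b = true := by
  intro b h
  unfold restrictS at h
  split_ifs at h
  exact h

lemma occ_restrictS {ω : Config d} {S : Set (Vertex d)} {a c : Vertex d} :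
    Occ (restrictS ω S) a c ↔ Occ ω a c ∧ a ∈ S ∧ c ∈ S := by
  constructor
  · intro h
    rw [occ_read] at h
    obtain ⟨β, hβ, hb⟩ := h
    unfold restrictS at hb
    split_ifs at hb with hcond
    · refine ⟨occ_read.mpr ⟨β, hβ, hb⟩, ?_, ?_⟩ <;>
        rcases hβ with ⟨h1, h2⟩ | ⟨h1, h2⟩
      · exact h1 ▸ hcond.1
      · exact h2 ▸ hcond.2
      · exact h2 ▸ hcond.2
      · exact h1 ▸ hcond.1
  · rintro ⟨h, ha, hc⟩
    rw [occ_read] at h ⊢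
    obtain ⟨β, hβ, hb⟩ := h
    refine ⟨β, hβ, ?_⟩
    unfold restrictS
    rw [if_pos ?_]
    · exact hb
    · rcases hβ with ⟨h1, h2⟩ | ⟨h1, h2⟩
      · exact ⟨h1.symm ▸ ha, h2.symm ▸ hc⟩
      · exact ⟨h1.symm ▸ hc, h2.symm ▸ ha⟩

end CuttingAux

section CuttingAux2

variable {d : ℕ} {ω ω' : Config d} {u v x y w a c : Vertex d} {A S : Set (Vertex d)}

lemma mem_tildeC_self : x ∈ tildeC ω u v x := Relation.ReflTransGen.refl

lemma tildeC_closed (hw : w ∈ tildeC ω u v x) (h : Occ ω w a) (hne : ¬ SameEdge w a u v) :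
    a ∈ tildeC ω u v x := Relation.ReflTransGen.tail hw ⟨h, hne⟩

lemma conn_of_mem_tildeC (hw : w ∈ tildeC ω u v x) : Conn ω x w :=
  rtgMono (fun _ _ h => h.1) hw

lemma tildeC_path_in (hw : w ∈ tildeC ω u v x) :
    Relation.ReflTransGen (OccAvoid (restrictS ω (tildeC ω u v x)) u v) x w := by
  induction hw with
  | refl => exact .refl
  | tail hp hstep ih =>
    exact ih.tail ⟨occ_restrictS.mpr ⟨hstep.1, hp, hp.tail hstep⟩, hstep.2⟩

lemma conn_restrictS_of_mem (hw : w ∈ tildeC ω u v x) :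
    Conn (restrictS ω (tildeC ω u v x)) x w :=
  rtgMono (fun _ _ h => h.1) (tildeC_path_in hw)

lemma conn_restrictS_pair (ha : a ∈ tildeC ω u v x) (hc : c ∈ tildeC ω u v x) :
    Conn (restrictS ω (tildeC ω u v x)) a c :=
  Relation.ReflTransGen.trans (conn_symm (conn_restrictS_of_mem ha)) (conn_restrictS_of_mem hc)

lemma conn_mono {ω₁ ω₂ : Config d} (hle : ∀ b, ω₁ b = true → ω₂ b = true)
    (h : Conn ω₁ a c) : Conn ω₂ a c :=
  rtgMono (fun _ _ hh => occ_mono hle hh) h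

/-- Master excursion-removal induction. -/
lemma exc_main (φ : Vertex d → Vertex d → Prop)
    (hu : u ∈ tildeC ω u v x) (hv : v ∉ tildeC ω u v x)
    (hw : Relation.ReflTransGen (fun a c => Occ ω a c ∧ φ a c) x w) :
    (w ∈ tildeC ω u v x →
      Relation.ReflTransGen
        (fun a c => Occ (restrictS ω (tildeC ω u v x)) a c ∧ φ a c) x w)
    ∧ (w ∉ tildeC ω u v x →
      Relation.ReflTransGen
        (fun a c => Occ (restrictS ω (tildeC ω u v x)) a c ∧ φ a c) x u) := by
  induction hw with
  | refl => exact ⟨fun _ => .refl, fun hx => absurd mem_tildeC_self hx⟩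
  | @tail w' w hp hstep ih =>
    constructor
    · intro hwS
      by_cases hw'S : w' ∈ tildeC ω u v x
      · exact (ih.1 hw'S).tail ⟨occ_restrictS.mpr ⟨hstep.1, hw'S, hwS⟩, hstep.2⟩
      · by_cases hse : SameEdge w' w u v
        · rcases hse with ⟨h1, h2⟩ | ⟨h1, h2⟩
          · exact absurd (h1 ▸ hw'S : u ∉ tildeC ω u v x) (not_not_intro hu)
          · exact h2 ▸ (ih.2 hw'S)
        · exact absurd
            (tildeC_closed hwS (occ_symm hstep.1) (fun hse' => hse (sameEdge_symm hse')))
            hw'S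
    · intro hwS
      by_cases hw'S : w' ∈ tildeC ω u v x
      · by_cases hse : SameEdge w' w u v
        · rcases hse with ⟨h1, h2⟩ | ⟨h1, h2⟩
          · exact h1 ▸ (ih.1 hw'S)
          · exact absurd (h1 ▸ hw'S : v ∈ tildeC ω u v x) hv
        · exact absurd (tildeC_closed hw'S hstep.1 hse) hwS
      · exact ih.2 hw'S

lemma connOff_restrictS (hu : u ∈ tildeC ω u v x) (hv : v ∉ tildeC ω u v x)
    (hw : w ∈ tildeC ω u v x) (h : ConnOff ω A x w) :
    ConnOff (restrictS ω (tildeC ω u v x)) A x w :=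
  (exc_main (fun a c => a ∉ A ∧ c ∉ A) hu hv h).1 hw

lemma mem_tildeC_restrictS (hu : u ∈ tildeC ω u v x) (hv : v ∉ tildeC ω u v x)
    (h : u ∈ tildeC ω a c x) : u ∈ tildeC (restrictS ω (tildeC ω u v x)) a c x :=
  (exc_main (fun a' c' => ¬ SameEdge a' c' a c) hu hv h).1 hu

lemma tildeC_avoid_iff (hu : u ∈ tildeC ω u v x) (hv : v ∉ tildeC ω u v x) :
    u ∈ tildeC ω a c x ↔ u ∈ tildeC (restrictS ω (tildeC ω u v x)) a c x := by
  constructor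
  · exact mem_tildeC_restrictS hu hv
  · intro h
    exact rtgMono
      (fun _ _ hh => ⟨occ_mono (restrictS_le ω _) hh.1, hh.2⟩) h

lemma stays_in (hu : u ∈ tildeC ω u v x) (hv : v ∈ tildeC ω u v x)
    (hw : w ∈ tildeC ω u v x) (h : Conn ω w a) : a ∈ tildeC ω u v x := by
  induction h with
  | refl => exact hw
  | @tail b c hp hstep ih =>
    by_cases hse : SameEdge b c u v
    · rcases hse with ⟨h1, h2⟩ | ⟨h1, h2⟩
      · exact h2 ▸ hv
      · exact h2 ▸ hu
    · exact tildeC_closed ih hstep hse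

lemma occ_uv_of_conn (h : Conn ω x w) : w ∈ tildeC ω u v x ∨ Occ ω u v := by
  induction h with
  | refl => exact Or.inl mem_tildeC_self
  | @tail b c hp hstep ih =>
    rcases ih with h1 | h1
    · by_cases hse : SameEdge b c u v
      · rcases hse with ⟨e1, e2⟩ | ⟨e1, e2⟩
        · exact Or.inr (e1 ▸ e2 ▸ hstep)
        · exact Or.inr (occ_symm (e1 ▸ e2 ▸ hstep))
      · exact Or.inl (tildeC_closed h1 hstep hse)
    · exact Or.inr h1

lemma connOff_of_conn (hu : u ∈ tildeC ω u v x) (hv : v ∉ tildeC ω u v x)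
    (h : Conn ω v w) (hw : w ∉ tildeC ω u v x) : ConnOff ω (tildeC ω u v x) v w := by
  have main : ∀ z, Conn ω v z →
      (z ∉ tildeC ω u v x ∧ ConnOff ω (tildeC ω u v x) v z) ∨ z ∈ tildeC ω u v x := by
    intro z hz
    induction hz with
    | refl => exact Or.inl ⟨hv, .refl⟩
    | @tail b c hp hstep ih =>
      rcases ih with ⟨h1, h2⟩ | h1
      · by_cases hcS : c ∈ tildeC ω u v x
        · exact Or.inr hcS
        · exact Or.inl ⟨hcS, h2.tail ⟨hstep, h1, hcS⟩⟩
      · by_cases hcS : c ∈ tildeC ω u v x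
        · exact Or.inr hcS
        · by_cases hse : SameEdge b c u v
          · rcases hse with ⟨e1, e2⟩ | ⟨e1, e2⟩
            · exact Or.inl ⟨e2 ▸ hv, e2 ▸ Relation.ReflTransGen.refl⟩
            · exact absurd (e2 ▸ hu) hcS
          · exact absurd (tildeC_closed h1 hstep hse) hcS
  rcases main w h with ⟨_, h2⟩ | h1
  · exact h2
  · exact absurd h1 hw

lemma not_eprime_of (hv : v ∉ tildeC ω u v x) (hu : u ∉ tildeC ω u v x) :
    ¬ Eprime ω x u A := by
  rintro ⟨h1, h2⟩
  have hconn : Conn ω x u := by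
    rcases h1 with ⟨heq, hA⟩ | ⟨hne, hc, _⟩
    · exact heq ▸ Relation.ReflTransGen.refl
    · exact hc
  have hocc : Occ ω u v := by
    rcases occ_uv_of_conn (u := u) (v := v) hconn with h | h
    · exact absurd h hu
    · exact h
  exact h2 ⟨u, v, hocc, ⟨hconn, Relation.ReflTransGen.single (occ_symm hocc), hu⟩, h1⟩

lemma u_mem_of_eprime (hE : Eprime ω x u A) (hv : v ∉ tildeC ω u v x) :
    u ∈ tildeC ω u v x := by
  by_contra hu
  exact not_eprime_of hv hu hE

lemma u_mem_of_eev (h : Eev ω x u v y A) : u ∈ tildeC ω u v x := by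
  obtain ⟨hE, hocc, hpiv⟩ := h
  by_contra hu
  exact hE.2 ⟨u, v, hocc, ⟨hpiv.1, Relation.ReflTransGen.single (occ_symm hocc), hu⟩, hE.1⟩

lemma connOff_last (h : ConnOff ω S v y) (hv : v ∉ S) : y ∉ S := by
  induction h with
  | refl => exact hv
  | tail _ hstep _ => exact hstep.2.2

/-- The key deterministic event identity. -/
lemma eev_iff {β : Bond d} (hβ : EdgeIs β u v) :
    Eev ω x u v y A ↔
      (ω β = true ∧ Eprime ω x u A ∧ v ∉ tildeC ω u v x ∧
        ConnOff ω (tildeC ω u v x) v y) := by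
  constructor
  · intro h
    obtain ⟨hE, hocc, hpiv⟩ := h
    have hu := u_mem_of_eev ⟨hE, hocc, hpiv⟩
    have hv : v ∉ tildeC ω u v x := by
      intro hvS
      exact hpiv.2.2 (stays_in hu hvS hvS hpiv.2.1)
    exact ⟨(occ_iff_coord hβ).mp hocc, hE, hv, connOff_of_conn hu hv hpiv.2.1 hpiv.2.2⟩
  · rintro ⟨hb, hE, hv, hco⟩
    have hocc := (occ_iff_coord hβ).mpr hb
    have hconn : Conn ω x u := by
      rcases hE.1 with ⟨heq, _⟩ | ⟨_, hc, _⟩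
      · exact heq ▸ Relation.ReflTransGen.refl
      · exact hc
    exact ⟨hE, hocc,
      hconn, rtgMono (fun _ _ hh => hh.1) hco, connOff_last hco hv⟩

end CuttingAux2

section CuttingAux3

variable {d : ℕ} {ω ω' : Config d} {u v x y w a c : Vertex d} {A S S₀ : Set (Vertex d)}

lemma connThrough_restrictS_iff (hu : u ∈ tildeC ω u v x) (hv : v ∉ tildeC ω u v x)
    (ha : a ∈ tildeC ω u v x) :
    ConnThrough ω A x a ↔ ConnThrough (restrictS ω (tildeC ω u v x)) A x a := by
  unfold ConnThrough
  apply or_congr Iff.rfl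
  apply and_congr Iff.rfl
  apply and_congr
  · exact iff_of_true (conn_of_mem_tildeC ha) (conn_restrictS_of_mem ha)
  · apply not_congr
    constructor
    · exact connOff_restrictS hu hv ha
    · exact fun h => rtgMono
        (fun _ _ hh => ⟨occ_mono (restrictS_le ω _) hh.1, hh.2⟩) h

lemma witness_mem (hu : u ∈ tildeC ω u v x) (hnp : u ∉ tildeC ω a c x) :
    a ∈ tildeC ω u v x ∧ c ∈ tildeC ω u v x := by
  by_contra hac
  apply hnp
  refine rtgMono ?_ (tildeC_path_in hu)
  rintro a' c' ⟨h1, _⟩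
  have h3 := occ_restrictS.mp h1
  refine ⟨h3.1, fun hse => hac ?_⟩
  rcases hse with ⟨e1, e2⟩ | ⟨e1, e2⟩
  · exact ⟨e1 ▸ h3.2.1, e2 ▸ h3.2.2⟩
  · exact ⟨e2 ▸ h3.2.2, e1 ▸ h3.2.1⟩

lemma eprime_restrictS_iff (hu : u ∈ tildeC ω u v x) (hv : v ∉ tildeC ω u v x) :
    Eprime ω x u A ↔ Eprime (restrictS ω (tildeC ω u v x)) x u A := by
  unfold Eprime
  apply and_congr (connThrough_restrictS_iff hu hv hu)
  apply not_congr
  constructor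
  · rintro ⟨a, c, hocc, hpiv, hth⟩
    obtain ⟨haS, hcS⟩ := witness_mem hu hpiv.2.2
    exact ⟨a, c, occ_restrictS.mpr ⟨hocc, haS, hcS⟩,
      ⟨conn_restrictS_of_mem haS, conn_restrictS_pair hcS hu,
        fun hmem => hpiv.2.2 ((tildeC_avoid_iff hu hv).mpr hmem)⟩,
      (connThrough_restrictS_iff hu hv haS).mp hth⟩
  · rintro ⟨a, c, hocc, hpiv, hth⟩
    have h3 := occ_restrictS.mp hocc
    exact ⟨a, c, h3.1,
      ⟨conn_of_mem_tildeC h3.2.1,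
        Relation.ReflTransGen.trans (conn_symm (conn_of_mem_tildeC h3.2.2))
          (conn_of_mem_tildeC hu),
        fun hmem => hpiv.2.2 ((tildeC_avoid_iff hu hv).mp hmem)⟩,
      (connThrough_restrictS_iff hu hv h3.2.1).mpr hth⟩

lemma eprime_restrictS_iff' (hS : tildeC ω u v x = S₀) (hu : u ∈ S₀) (hv : v ∉ S₀) :
    Eprime ω x u A ↔ Eprime (restrictS ω S₀) x u A := by
  subst hS; exact eprime_restrictS_iff hu hv

lemma tildeC_update {β : Bond d} (hβ : EdgeIs β u v) (t : Bool) :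
    tildeC (Function.update ω β t) u v x = tildeC ω u v x := by
  ext w
  constructor
  · exact fun h => rtgMono
      (fun _ _ hh => ⟨(occ_update hβ hh.2 t).mp hh.1, hh.2⟩) h
  · exact fun h => rtgMono
      (fun _ _ hh => ⟨(occ_update hβ hh.2 t).mpr hh.1, hh.2⟩) h

lemma restrictS_update {β : Bond d} (hβ : EdgeIs β u v) (hv : v ∉ S) (t : Bool) :
    restrictS (Function.update ω β t) S = restrictS ω S := by
  funext b
  unfold restrictS
  by_cases hcond : b.1 ∈ S ∧ bsnd b ∈ S
  · rw [if_pos hcond, if_pos hcond, Function.update_of_ne ?_]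
    intro hbβ
    subst hbβ
    rcases hβ with ⟨h1, h2⟩ | ⟨h1, h2⟩
    · exact hv (h2 ▸ hcond.2)
    · exact hv (h1 ▸ hcond.1)
  · rw [if_neg hcond, if_neg hcond]

lemma connOff_update_iff {β : Bond d} (hβ : EdgeIs β u v) (hu : u ∈ S) (t : Bool)
    {p q : Vertex d} :
    ConnOff (Function.update ω β t) S p q ↔ ConnOff ω S p q := by
  have key : ∀ a' c' : Vertex d, a' ∉ S → c' ∉ S → ¬ SameEdge a' c' u v := by
    rintro a' c' ha hc (⟨e1, e2⟩ | ⟨e1, e2⟩)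
    · exact ha (e1 ▸ hu)
    · exact hc (e2 ▸ hu)
  constructor
  · exact fun h => rtgMono
      (fun a' c' hh =>
        ⟨(occ_update hβ (key a' c' hh.2.1 hh.2.2) t).mp hh.1, hh.2⟩) h
  · exact fun h => rtgMono
      (fun a' c' hh =>
        ⟨(occ_update hβ (key a' c' hh.2.1 hh.2.2) t).mpr hh.1, hh.2⟩) h

lemma tildeC_congr (hS : tildeC ω u v x = S₀) (hag : ∀ b ∈ BS S₀, ω b = ω' b) :
    tildeC ω' u v x = S₀ := by
  apply Set.Subset.antisymm
  · intro w hw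
    induction hw with
    | refl =>
      rw [← hS]; exact mem_tildeC_self
    | @tail b c hp hstep ih =>
      have hb : b ∈ tildeC ω u v x := by rw [hS]; exact ih
      have hocc : Occ ω b c := (occ_congr_on hag (Or.inl ih)).mpr hstep.1
      rw [← hS]
      exact tildeC_closed hb hocc hstep.2
  · intro w hw
    have hw' : w ∈ tildeC ω u v x := by rw [hS]; exact hw
    show w ∈ tildeC ω' u v x
    refine rtgMono ?_ (tildeC_path_in hw')
    rintro a' c' ⟨h1, h2⟩
    have h3 := occ_restrictS.mp h1
    have ha' : a' ∈ S₀ := by rw [← hS]; exact h3.2.1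
    exact ⟨(occ_congr_on hag (Or.inl ha')).mp h3.1, h2⟩

lemma restrictS_congr (hag : ∀ b ∈ BS S₀, ω b = ω' b) :
    restrictS ω S₀ = restrictS ω' S₀ := by
  funext b
  unfold restrictS
  by_cases hcond : b.1 ∈ S₀ ∧ bsnd b ∈ S₀
  · rw [if_pos hcond, if_pos hcond, hag b (Or.inl hcond.1)]
  · rw [if_neg hcond, if_neg hcond]

lemma W_congr (hag : ∀ b ∈ BS S₀, ω b = ω' b)
    (h : tildeC ω u v x = S₀ ∧ Eprime ω x u A ∧ v ∉ S₀) :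
    tildeC ω' u v x = S₀ ∧ Eprime ω' x u A ∧ v ∉ S₀ := by
  obtain ⟨hS, hE, hv⟩ := h
  have hS' := tildeC_congr hS hag
  refine ⟨hS', ?_, hv⟩
  by_cases hu : u ∈ S₀
  · rw [eprime_restrictS_iff' hS' hu hv, ← restrictS_congr hag]
    exact (eprime_restrictS_iff' hS hu hv).mp hE
  · exact absurd hE (not_eprime_of (by rw [hS]; exact hv) (by rw [hS]; exact hu))

lemma connOff_congr_off (hag : ∀ b ∉ BS S₀, ω b = ω' b) {p q : Vertex d} :
    ConnOff ω S₀ p q ↔ ConnOff ω' S₀ p q := by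
  constructor
  · exact fun h => rtgMono
      (fun a' c' hh => ⟨(occ_congr_off hag hh.2.1 hh.2.2).mp hh.1, hh.2⟩) h
  · exact fun h => rtgMono
      (fun a' c' hh => ⟨(occ_congr_off hag hh.2.1 hh.2.2).mpr hh.1, hh.2⟩) h

lemma D_pred_update {β : Bond d} (hβ : EdgeIs β u v) (t : Bool)
    (h : Eprime ω x u A ∧ v ∉ tildeC ω u v x ∧ ConnOff ω (tildeC ω u v x) v y) :
    Eprime (Function.update ω β t) x u A ∧
      v ∉ tildeC (Function.update ω β t) u v x ∧
      ConnOff (Function.update ω β t) (tildeC (Function.update ω β t) u v x) v y := by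
  obtain ⟨hE, hv, hco⟩ := h
  have hu := u_mem_of_eprime hE hv
  have htc := tildeC_update (ω := ω) (x := x) hβ t
  rw [htc]
  have e1 : Eprime (Function.update ω β t) x u A ↔
      Eprime (restrictS (Function.update ω β t) (tildeC ω u v x)) x u A :=
    eprime_restrictS_iff' htc hu hv
  have e2 : Eprime ω x u A ↔ Eprime (restrictS ω (tildeC ω u v x)) x u A :=
    eprime_restrictS_iff' rfl hu hv
  refine ⟨?_, hv, ?_⟩
  · rw [e1, restrictS_update hβ hv t]
    exact e2.mp hE
  · exact (connOff_update_iff hβ hu t).mpr hco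

end CuttingAux3

section CuttingAux4

variable {d : ℕ}

lemma norm1_unit {w : Vertex d} (h : norm1 w = 1) :
    ∃ i, w = basis i ∨ w = -basis i := by
  classical
  have h' : ∑ j, |w j| = 1 := h
  have hex : ∃ i, w i ≠ 0 := by
    by_contra hc
    push_neg at hc
    rw [Finset.sum_eq_zero (fun j _ => by rw [hc j, abs_zero])] at h'
    exact one_ne_zero h'.symm
  obtain ⟨i, hi⟩ := hex
  have h1 : 1 ≤ |w i| := Int.one_le_abs hi
  have hle : |w i| ≤ ∑ j, |w j| :=
    Finset.single_le_sum (fun j _ => abs_nonneg (w j)) (Finset.mem_univ i)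
  have hwi : |w i| = 1 := le_antisymm (h' ▸ hle) h1
  have hrest : ∀ j, j ≠ i → w j = 0 := by
    intro j hj
    have hsplit : |w i| + ∑ k ∈ Finset.univ.erase i, |w k| = ∑ j, |w j| :=
      Finset.add_sum_erase Finset.univ (fun j => |w j|) (Finset.mem_univ i)
    have h0 : ∑ k ∈ Finset.univ.erase i, |w k| = 0 := by
      rw [h'] at hsplit; omega
    have := (Finset.sum_eq_zero_iff_of_nonneg (fun k _ => abs_nonneg (w k))).mp h0 j
      (Finset.mem_erase.mpr ⟨hj, Finset.mem_univ j⟩)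
    exact abs_eq_zero.mp this
  rcases (abs_eq (by norm_num : (0:ℤ) ≤ 1)).mp hwi with h2 | h2
  · refine ⟨i, Or.inl (funext fun j => ?_)⟩
    by_cases hj : j = i
    · subst hj; simpa [basis] using h2
    · simp [basis, hj, hrest j hj]
  · refine ⟨i, Or.inr (funext fun j => ?_)⟩
    by_cases hj : j = i
    · subst hj; simpa [basis] using h2
    · simp [basis, hj, hrest j hj]

lemma exists_edgeIs {u v : Vertex d} (huv : norm1 (u - v) = 1) :
    ∃ β : Bond d, EdgeIs β u v := by
  obtain ⟨i, h | h⟩ := norm1_unit huv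
  · -- u - v = basis i, so u = v + basis i
    refine ⟨(v, i), Or.inr ⟨rfl, ?_⟩⟩
    show v + basis i = u
    rw [← h]; ring
  · -- u - v = -basis i, so v = u + basis i
    refine ⟨(u, i), Or.inl ⟨rfl, ?_⟩⟩
    show u + basis i = v
    have hu : u = -basis i + v := by
      have := congrArg (fun z => z + v) h
      simpa [sub_add_cancel] using this
    rw [hu]; abel

end CuttingAux4

section CuttingMeas

variable {d : ℕ}

lemma measurableSet_coord (b : Bond d) (t : Bool) :
    MeasurableSet {ω : Config d | ω b = t} := by
  have : {ω : Config d | ω b = t} = (fun ω : Config d => ω b) ⁻¹' {t} := rfl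
  rw [this]
  exact measurable_pi_apply b (measurableSet_singleton t)

lemma measurableSet_occ (a c : Vertex d) : MeasurableSet {ω : Config d | Occ ω a c} := by
  have heq : {ω : Config d | Occ ω a c} =
      (⋃ i, {ω : Config d | c = a + basis i} ∩ {ω | ω (a, i) = true}) ∪
      (⋃ i, {ω : Config d | a = c + basis i} ∩ {ω | ω (c, i) = true}) := by
    ext ω
    simp only [Set.mem_setOf_eq, Set.mem_union, Set.mem_iUnion, Set.mem_inter_iff]
    rfl
  rw [heq]
  refine MeasurableSet.union ?_ ?_ <;>
    refine MeasurableSet.iUnion fun i => MeasurableSet.inter ?_ (measurableSet_coord _ _) <;>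
    exact MeasurableSet.const _

lemma measurableSet_rtg {R : Config d → Vertex d → Vertex d → Prop}
    (hR : ∀ a c, MeasurableSet {ω | R ω a c}) (a c : Vertex d) :
    MeasurableSet {ω : Config d | Relation.ReflTransGen (R ω) a c} := by
  have heq : {ω : Config d | Relation.ReflTransGen (R ω) a c} =
      ⋃ l : List (Vertex d),
        {ω | List.Chain (R ω) a l} ∩ {ω | (a :: l).getLast (by simp) = c} := by
    ext ω
    simp only [Set.mem_setOf_eq, Set.mem_iUnion, Set.mem_inter_iff]
    constructor
    · exact fun h => (List.exists_isChain_cons_of_relationReflTransGen h).imp (fun l hl => hl)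
    · rintro ⟨l, h1, h2⟩
      exact List.relationReflTransGen_of_exists_isChain_cons l h1 h2
  rw [heq]
  have chain : ∀ (l : List (Vertex d)) (a : Vertex d),
      MeasurableSet {ω : Config d | List.Chain (R ω) a l} := by
    intro l
    induction l with
    | nil =>
      intro a
      have : {ω : Config d | List.Chain (R ω) a []} = Set.univ :=
        Set.eq_univ_of_forall (fun ω => List.Chain.nil)
      rw [this]; exact MeasurableSet.univ
    | cons q l ih =>
      intro a
      have : {ω : Config d | List.Chain (R ω) a (q :: l)} =
          {ω | R ω a q} ∩ {ω | List.Chain (R ω) q l} := by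
        ext ω; simp [List.Chain, List.isChain_cons_cons]
      rw [this]
      exact (hR a q).inter (ih q)
  exact MeasurableSet.iUnion fun l => MeasurableSet.inter (chain l a) (MeasurableSet.const _)

lemma measurableSet_conn (a c : Vertex d) :
    MeasurableSet {ω : Config d | Conn ω a c} :=
  measurableSet_rtg (fun a' c' => measurableSet_occ a' c') a c

lemma measurableSet_occOff (A : Set (Vertex d)) (a c : Vertex d) :
    MeasurableSet {ω : Config d | OccOff ω A a c} := by
  have : {ω : Config d | OccOff ω A a c} =
      {ω | Occ ω a c} ∩ {ω | a ∉ A ∧ c ∉ A} := rfl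
  rw [this]
  exact (measurableSet_occ a c).inter (MeasurableSet.const _)

lemma measurableSet_connOff (A : Set (Vertex d)) (a c : Vertex d) :
    MeasurableSet {ω : Config d | ConnOff ω A a c} :=
  measurableSet_rtg (fun a' c' => measurableSet_occOff A a' c') a c

lemma measurableSet_tildeC_mem (u v x w : Vertex d) :
    MeasurableSet {ω : Config d | w ∈ tildeC ω u v x} := by
  refine measurableSet_rtg (fun a' c' => ?_) x w
  have : {ω : Config d | OccAvoid ω u v a' c'} =
      {ω | Occ ω a' c'} ∩ {ω | ¬ SameEdge a' c' u v} := rfl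
  rw [this]
  exact (measurableSet_occ a' c').inter (MeasurableSet.const _)

lemma measurableSet_connThrough (A : Set (Vertex d)) (a c : Vertex d) :
    MeasurableSet {ω : Config d | ConnThrough ω A a c} := by
  have : {ω : Config d | ConnThrough ω A a c} =
      {ω : Config d | a = c ∧ a ∈ A} ∪
        ({ω | a ≠ c} ∩ {ω | Conn ω a c} ∩ {ω | ConnOff ω A a c}ᶜ) := by
    ext ω
    simp only [Set.mem_setOf_eq, Set.mem_union, Set.mem_inter_iff, Set.mem_compl_iff,
      ConnThrough]
    tauto
  rw [this]
  exact (MeasurableSet.const _).union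
    (((MeasurableSet.const _).inter (measurableSet_conn a c)).inter
      (measurableSet_connOff A a c).compl)

lemma measurableSet_pivotal (p q a c : Vertex d) :
    MeasurableSet {ω : Config d | Pivotal ω p q a c} := by
  have : {ω : Config d | Pivotal ω p q a c} =
      {ω | Conn ω a p} ∩ {ω | Conn ω q c} ∩ {ω | c ∈ tildeC ω p q a}ᶜ := by
    ext ω; simp [Pivotal, Set.mem_inter_iff]; tauto
  rw [this]
  exact ((measurableSet_conn a p).inter (measurableSet_conn q c)).inter
    (measurableSet_tildeC_mem p q a c).compl

lemma measurableSet_eprime (A : Set (Vertex d)) (a c : Vertex d) :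
    MeasurableSet {ω : Config d | Eprime ω a c A} := by
  have h1 : {ω : Config d | Eprime ω a c A} =
      {ω | ConnThrough ω A a c} ∩
        {ω : Config d | ∃ p q, Occ ω p q ∧ Pivotal ω p q a c ∧ ConnThrough ω A a p}ᶜ := rfl
  have h2 : {ω : Config d | ∃ p q, Occ ω p q ∧ Pivotal ω p q a c ∧ ConnThrough ω A a p} =
      ⋃ p : Vertex d, ⋃ q : Vertex d,
        ({ω | Occ ω p q} ∩ ({ω | Pivotal ω p q a c} ∩ {ω | ConnThrough ω A a p})) := by
    ext ω
    simp only [Set.mem_setOf_eq, Set.mem_iUnion, Set.mem_inter_iff]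
  rw [h1, h2]
  refine (measurableSet_connThrough A a c).inter (MeasurableSet.compl ?_)
  refine MeasurableSet.iUnion fun p => MeasurableSet.iUnion fun q => ?_
  exact (measurableSet_occ p q).inter
    ((measurableSet_pivotal p q a c).inter (measurableSet_connThrough A a p))

lemma measurable_update_config (β : Bond d) (t : Bool) :
    Measurable (fun ω : Config d => Function.update ω β t) := by
  refine measurable_pi_lambda _ (fun b => ?_)
  by_cases hb : b = β
  · subst hb
    simp only [Function.update_self]
    exact measurable_const
  · simp only [Function.update_of_ne hb]
    exact measurable_pi_apply b

end CuttingMeas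

section CuttingProb

/-- The residual map of the Bernoulli splitting. -/
noncomputable def Tsplit (p : ℝ) (u : ℝ) : ℝ := if u < p then u / p else (u - p) / (1 - p)

/-- The Bernoulli weights. -/
noncomputable def wB (p : ℝ) : Bool → ℝ≥0∞ :=
  fun t => if t then ENNReal.ofReal p else ENNReal.ofReal (1 - p)

lemma bit_succ (p : ℝ) (n : ℕ) (u : ℝ) : bit p (n + 1) u = bit p n (Tsplit p u) := rfl

lemma bit_zero_iff (p : ℝ) (u : ℝ) (t : Bool) : bit p 0 u = t ↔ (u < p ↔ t = true) := by
  cases t <;> simp [bit] <;> split_ifs <;> simp_all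

lemma measurable_Tsplit (p : ℝ) : Measurable (Tsplit p) := by
  unfold Tsplit
  exact Measurable.ite (measurableSet_lt measurable_id measurable_const)
    (measurable_id.div_const p) ((measurable_id.sub_const p).div_const (1 - p))

lemma measurable_bit (p : ℝ) (n : ℕ) : Measurable (bit p n) := by
  induction n with
  | zero =>
    unfold bit
    exact Measurable.ite (measurableSet_lt measurable_id measurable_const)
      measurable_const measurable_const
  | succ n ih =>
    have : bit p (n + 1) = fun u => bit p n (Tsplit p u) := rfl
    rw [this]
    exact ih.comp (measurable_Tsplit p)

lemma wB_total {p : ℝ} (hp0 : 0 ≤ p) (hp1 : p ≤ 1) : wB p true + wB p false = 1 := by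
  have h : wB p true + wB p false = ENNReal.ofReal p + ENNReal.ofReal (1 - p) := by
    simp [wB]
  rw [h, ← ENNReal.ofReal_add hp0 (by linarith), ← ENNReal.ofReal_one]
  norm_num

/-- The basic one-step splitting computation for Lebesgue measure. -/
lemma split_lemma {p : ℝ} (hp0 : 0 ≤ p) (hp1 : p ≤ 1) (t : Bool) {G : Set ℝ}
    (hG : MeasurableSet G) :
    volume ({u | bit p 0 u = t ∧ Tsplit p u ∈ G} ∩ Set.Ico (0:ℝ) 1) =
      wB p t * volume (G ∩ Set.Ico (0:ℝ) 1) := by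
  cases t with
  | true =>
    rcases eq_or_lt_of_le hp0 with hp | hp
    · -- p = 0 : left side is empty, weight is 0
      have hempty : {u | bit p 0 u = true ∧ Tsplit p u ∈ G} ∩ Set.Ico (0:ℝ) 1 = ∅ := by
        apply Set.eq_empty_iff_forall_notMem.mpr
        rintro u ⟨⟨hb, -⟩, h0, -⟩
        rw [bit_zero_iff] at hb
        have := hb.mpr rfl
        rw [← hp] at this
        linarith
      rw [hempty]
      simp [wB, ← hp]
    · -- p > 0
      have hset : {u | bit p 0 u = true ∧ Tsplit p u ∈ G} ∩ Set.Ico (0:ℝ) 1 =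
          (fun u => p⁻¹ * u) ⁻¹' (G ∩ Set.Ico (0:ℝ) 1) := by
        ext u
        simp only [Set.mem_inter_iff, Set.mem_setOf_eq, Set.mem_Ico, Set.mem_preimage]
        constructor
        · rintro ⟨⟨hb, hT⟩, h0, h1⟩
          rw [bit_zero_iff] at hb
          have hup : u < p := hb.mpr rfl
          have hTu : Tsplit p u = p⁻¹ * u := by
            rw [Tsplit, if_pos hup, div_eq_inv_mul]
          constructor
          · rw [← hTu]; exact hT
          · constructor
            · positivity
            · rw [inv_mul_lt_iff₀ hp, mul_one]; exact hup
        · rintro ⟨hG', h0, h1⟩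
          have hup : u < p := by
            rw [inv_mul_lt_iff₀ hp, mul_one] at h1
            exact h1
          have hu0 : 0 ≤ u := by
            by_contra hneg
            push_neg at hneg
            have : p⁻¹ * u < 0 := mul_neg_of_pos_of_neg (by positivity) hneg
            linarith
          have hTu : Tsplit p u = p⁻¹ * u := by
            rw [Tsplit, if_pos hup, div_eq_inv_mul]
          exact ⟨⟨(bit_zero_iff p u true).mpr (by simp [hup]), hTu ▸ hG'⟩, hu0,
            lt_of_lt_of_le hup hp1⟩
      rw [hset, Real.volume_preimage_mul_left (by positivity) _]
      simp only [wB, ite_true, inv_inv, abs_of_pos hp]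
  | false =>
    rcases eq_or_lt_of_le hp1 with hpeq | hplt
    · -- p = 1 : the event "bit = false" is empty on [0,1)
      have hempty : {u | bit p 0 u = false ∧ Tsplit p u ∈ G} ∩ Set.Ico (0:ℝ) 1 = ∅ := by
        apply Set.eq_empty_iff_forall_notMem.mpr
        rintro u ⟨⟨hb, -⟩, h0, h1⟩
        rw [bit_zero_iff] at hb
        have : ¬ u < p := fun hlt => by simpa using hb.mp hlt
        rw [← hpeq] at h1
        exact this h1
      rw [hempty]
      simp [wB, ← hpeq]
    · have h1p : (0:ℝ) < 1 - p := by linarith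
      have hset : {u | bit p 0 u = false ∧ Tsplit p u ∈ G} ∩ Set.Ico (0:ℝ) 1 =
          (fun u => -p + u) ⁻¹' ((fun y => (1 - p)⁻¹ * y) ⁻¹' (G ∩ Set.Ico (0:ℝ) 1)) := by
        ext u
        simp only [Set.mem_inter_iff, Set.mem_setOf_eq, Set.mem_Ico, Set.mem_preimage]
        constructor
        · rintro ⟨⟨hb, hT⟩, h0, h1⟩
          rw [bit_zero_iff] at hb
          have hup : ¬ u < p := by
            intro hlt
            exact absurd (hb.mp hlt) (by simp)
          push_neg at hup
          have hTu : Tsplit p u = (1 - p)⁻¹ * (-p + u) := by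
            rw [Tsplit, if_neg (not_lt.mpr hup), div_eq_inv_mul]
            ring_nf
          refine ⟨hTu ▸ hT, ?_, ?_⟩
          · exact mul_nonneg (by positivity) (by linarith)
          · rw [inv_mul_lt_iff₀ h1p, mul_one]
            linarith
        · rintro ⟨hG', h2, h3⟩
          have hup : p ≤ u := by
            by_contra hlt
            push_neg at hlt
            have : (1 - p)⁻¹ * (-p + u) < 0 :=
              mul_neg_of_pos_of_neg (by positivity) (by linarith)
            linarith
          have hTu : Tsplit p u = (1 - p)⁻¹ * (-p + u) := by
            rw [Tsplit, if_neg (not_lt.mpr hup), div_eq_inv_mul]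
            ring_nf
          have h1 : u < 1 := by
            rw [inv_mul_lt_iff₀ h1p, mul_one] at h3
            linarith
          exact ⟨⟨(bit_zero_iff p u false).mpr (by simp [not_lt.mpr hup]), hTu ▸ hG'⟩,
            le_trans hp0 hup, h1⟩
      rw [hset, measure_preimage_add volume (-p) _,
        Real.volume_preimage_mul_left (by positivity) _]
      norm_num [wB, abs_of_pos h1p]

end CuttingProb

section CuttingSeq

/-- All the Bernoulli bits as a sequence. -/
noncomputable def bitSeq (p : ℝ) : ℝ → (ℕ → Bool) := fun u n => bit p n u

/-- The law of the i.i.d. Bernoulli sequence. -/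
noncomputable def seqMeasure (p : ℝ) : Measure (ℕ → Bool) :=
  Measure.map (bitSeq p) (volume.restrict (Set.Ico (0:ℝ) 1))

def shiftSeq : (ℕ → Bool) → (ℕ → Bool) := fun s n => s (n + 1)

def consSeq (t : Bool) : (ℕ → Bool) → (ℕ → Bool) := fun s n => Nat.casesOn n t s

lemma consSeq_shift (s : ℕ → Bool) : consSeq (s 0) (shiftSeq s) = s := by
  funext n; cases n <;> rfl

lemma measurable_bitSeq (p : ℝ) : Measurable (bitSeq p) :=
  measurable_pi_lambda _ (fun n => measurable_bit p n)

lemma measurable_shiftSeq : Measurable shiftSeq :=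
  measurable_pi_lambda _ (fun n => measurable_pi_apply (n + 1))

lemma measurable_consSeq (t : Bool) : Measurable (consSeq t) := by
  refine measurable_pi_lambda _ (fun n => ?_)
  cases n with
  | zero => exact measurable_const
  | succ m => exact measurable_pi_apply m

lemma measurableSet_seqCoord (k : ℕ) (t : Bool) :
    MeasurableSet {s : ℕ → Bool | s k = t} := by
  have : {s : ℕ → Bool | s k = t} = (fun s : ℕ → Bool => s k) ⁻¹' {t} := rfl
  rw [this]
  exact measurable_pi_apply k (measurableSet_singleton t)

lemma bitSeq_Tsplit (p : ℝ) (u : ℝ) : bitSeq p (Tsplit p u) = shiftSeq (bitSeq p u) := by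
  funext n
  rfl

/-- One-step conditioning for the sequence measure. -/
lemma step_lemma {p : ℝ} (hp0 : 0 ≤ p) (hp1 : p ≤ 1) (t : Bool) {J : Set (ℕ → Bool)}
    (hJ : MeasurableSet J) :
    seqMeasure p ({s | s 0 = t} ∩ shiftSeq ⁻¹' J) = wB p t * seqMeasure p J := by
  unfold seqMeasure
  rw [Measure.map_apply (measurable_bitSeq p)
      (((measurableSet_seqCoord 0 t).inter (measurable_shiftSeq hJ))),
    Measure.map_apply (measurable_bitSeq p) hJ,
    Measure.restrict_apply (measurable_bitSeq p ((measurableSet_seqCoord 0 t).inter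
      (measurable_shiftSeq hJ))),
    Measure.restrict_apply (measurable_bitSeq p hJ)]
  have hpre : bitSeq p ⁻¹' ({s | s 0 = t} ∩ shiftSeq ⁻¹' J) =
      {u | bit p 0 u = t ∧ Tsplit p u ∈ bitSeq p ⁻¹' J} := by
    ext u
    simp only [Set.mem_preimage, Set.mem_inter_iff, Set.mem_setOf_eq]
    constructor
    · rintro ⟨h1, h2⟩
      refine ⟨h1, ?_⟩
      rw [bitSeq_Tsplit]
      exact h2
    · rintro ⟨h1, h2⟩
      rw [bitSeq_Tsplit] at h2
      exact ⟨h1, h2⟩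
  rw [hpre]
  exact split_lemma hp0 hp1 t (measurable_bitSeq p hJ)

lemma seq_split_coord (t : Bool) (H : Set (ℕ → Bool)) :
    {s | s 0 = t} ∩ H = {s | s 0 = t} ∩ shiftSeq ⁻¹' (consSeq t ⁻¹' H) := by
  ext s
  simp only [Set.mem_inter_iff, Set.mem_setOf_eq, Set.mem_preimage]
  constructor
  · rintro ⟨h0, hH⟩
    refine ⟨h0, ?_⟩
    show consSeq t (shiftSeq s) ∈ H
    rw [← h0, consSeq_shift]
    exact hH
  · rintro ⟨h0, hH⟩
    refine ⟨h0, ?_⟩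
    have : consSeq t (shiftSeq s) ∈ H := hH
    rwa [← h0, consSeq_shift] at this

/-- Decomposition of the sequence measure over the first coordinate. -/
lemma seq_decomp {p : ℝ} (hp0 : 0 ≤ p) (hp1 : p ≤ 1) {H : Set (ℕ → Bool)}
    (hH : MeasurableSet H) :
    seqMeasure p H =
      wB p true * seqMeasure p (consSeq true ⁻¹' H) +
      wB p false * seqMeasure p (consSeq false ⁻¹' H) := by
  have hpart : H = ({s | s 0 = true} ∩ H) ∪ ({s | s 0 = false} ∩ H) := by
    ext s
    constructor
    · intro hs
      cases hb : s 0
      · exact Or.inr ⟨hb, hs⟩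
      · exact Or.inl ⟨hb, hs⟩
    · rintro (⟨-, hs⟩ | ⟨-, hs⟩) <;> exact hs
  have hdisj : Disjoint ({s : ℕ → Bool | s 0 = true} ∩ H) ({s | s 0 = false} ∩ H) := by
    rw [Set.disjoint_left]
    rintro s ⟨h1, -⟩ ⟨h2, -⟩
    simp only [Set.mem_setOf_eq] at h1 h2
    rw [h1] at h2
    exact Bool.noConfusion h2
  conv_lhs => rw [hpart]
  rw [measure_union hdisj ((measurableSet_seqCoord 0 false).inter hH),
    seq_split_coord true H, seq_split_coord false H,
    step_lemma hp0 hp1 true (measurable_consSeq true hH),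
    step_lemma hp0 hp1 false (measurable_consSeq false hH)]

/-- Single-coordinate independence for the sequence measure. -/
lemma seq_single {p : ℝ} (hp0 : 0 ≤ p) (hp1 : p ≤ 1) (k : ℕ) (t : Bool) :
    ∀ (H : Set (ℕ → Bool)), MeasurableSet H →
    (∀ s s' : ℕ → Bool, (∀ m, m ≠ k → s m = s' m) → (s ∈ H ↔ s' ∈ H)) →
    seqMeasure p ({s | s k = t} ∩ H) = wB p t * seqMeasure p H := by
  induction k with
  | zero =>
    intro H hH hdet
    have hc : ∀ t' t'', (consSeq t' ⁻¹' H) = (consSeq t'' ⁻¹' H) := by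
      intro t' t''
      ext r
      exact hdet (consSeq t' r) (consSeq t'' r) (fun m hm => by
        cases m with
        | zero => exact absurd rfl hm
        | succ n => rfl)
    have hmuH : seqMeasure p H = seqMeasure p (consSeq t ⁻¹' H) := by
      rw [seq_decomp hp0 hp1 hH, hc true t, hc false t, ← add_mul,
        wB_total hp0 hp1, one_mul]
    rw [seq_split_coord t H, step_lemma hp0 hp1 t (measurable_consSeq t hH), hmuH]
  | succ k ih =>
    intro H hH hdet
    have key : ∀ t' : Bool, {s : ℕ → Bool | s 0 = t'} ∩ ({s | s (k+1) = t} ∩ H) =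
        {s | s 0 = t'} ∩ shiftSeq ⁻¹' ({r | r k = t} ∩ (consSeq t' ⁻¹' H)) := by
      intro t'
      ext s
      simp only [Set.mem_inter_iff, Set.mem_setOf_eq, Set.mem_preimage]
      constructor
      · rintro ⟨h0, hk, hH'⟩
        refine ⟨h0, hk, ?_⟩
        show consSeq t' (shiftSeq s) ∈ H
        rw [← h0, consSeq_shift]
        exact hH'
      · rintro ⟨h0, hk, hH'⟩
        refine ⟨h0, hk, ?_⟩
        have hmem : consSeq t' (shiftSeq s) ∈ H := hH'
        rwa [← h0, consSeq_shift] at hmem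
    have hdet' : ∀ t' : Bool, ∀ s s' : ℕ → Bool, (∀ m, m ≠ k → s m = s' m) →
        (s ∈ consSeq t' ⁻¹' H ↔ s' ∈ consSeq t' ⁻¹' H) := by
      intro t' s s' hag
      exact hdet (consSeq t' s) (consSeq t' s') (fun m hm => by
        cases m with
        | zero => rfl
        | succ n => exact hag n (fun hn => hm (by rw [hn])))
    have hpart : {s : ℕ → Bool | s (k+1) = t} ∩ H =
        ({s | s 0 = true} ∩ ({s | s (k+1) = t} ∩ H)) ∪
        ({s | s 0 = false} ∩ ({s | s (k+1) = t} ∩ H)) := by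
      ext s
      constructor
      · intro hs
        cases hb : s 0
        · exact Or.inr ⟨hb, hs⟩
        · exact Or.inl ⟨hb, hs⟩
      · rintro (⟨-, hs⟩ | ⟨-, hs⟩) <;> exact hs
    have hmeas : ∀ t', MeasurableSet ({s : ℕ → Bool | s 0 = t'} ∩ ({s | s (k+1) = t} ∩ H)) :=
      fun t' => (measurableSet_seqCoord 0 t').inter ((measurableSet_seqCoord (k+1) t).inter hH)
    have hdisj : Disjoint ({s : ℕ → Bool | s 0 = true} ∩ ({s | s (k+1) = t} ∩ H))
        ({s | s 0 = false} ∩ ({s | s (k+1) = t} ∩ H)) := by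
      rw [Set.disjoint_left]
      rintro s ⟨h1, -⟩ ⟨h2, -⟩
      simp only [Set.mem_setOf_eq] at h1 h2
      rw [h1] at h2
      exact Bool.noConfusion h2
    conv_lhs => rw [hpart]
    rw [measure_union hdisj (hmeas false), key true, key false,
      step_lemma hp0 hp1 true ((measurableSet_seqCoord k t).inter
        (measurable_consSeq true hH)),
      step_lemma hp0 hp1 false ((measurableSet_seqCoord k t).inter
        (measurable_consSeq false hH)),
      ih _ (measurable_consSeq true hH) (hdet' true),
      ih _ (measurable_consSeq false hH) (hdet' false),
      seq_decomp hp0 hp1 hH]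
    ring

end CuttingSeq

section CuttingConfig

variable {d : ℕ}

/-- Reindexing a sequence of bits by bond encodings. -/
noncomputable def reindexC (d : ℕ) : (ℕ → Bool) → Config d :=
  fun s b => s (Encodable.encode b)

lemma measurable_reindexC : Measurable (reindexC d) :=
  measurable_pi_lambda _ (fun b => measurable_pi_apply (Encodable.encode b))

lemma percMeasure_eq_map (p : ℝ) :
    percMeasure d p = Measure.map (reindexC d) (seqMeasure p) := by
  unfold percMeasure seqMeasure
  rw [Measure.map_map measurable_reindexC (measurable_bitSeq p)]
  rfl

lemma percMeasure_apply (p : ℝ) {E : Set (Config d)} (hE : MeasurableSet E) :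
    percMeasure d p E = seqMeasure p (reindexC d ⁻¹' E) := by
  rw [percMeasure_eq_map p, Measure.map_apply measurable_reindexC hE]

lemma percMeasure_univ (p : ℝ) (hp0 : 0 ≤ p) (hp1 : p ≤ 1) :
    percMeasure d p Set.univ = 1 := by
  unfold percMeasure
  rw [Measure.map_apply (measurable_pi_lambda _
      (fun b => measurable_bit p (Encodable.encode b))) MeasurableSet.univ,
    Set.preimage_univ, Measure.restrict_apply MeasurableSet.univ, Set.univ_inter,
    Real.volume_Ico]
  norm_num

lemma percMeasure_le_one (p : ℝ) (hp0 : 0 ≤ p) (hp1 : p ≤ 1) (E : Set (Config d)) :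
    percMeasure d p E ≤ 1 := by
  rw [← percMeasure_univ (d := d) p hp0 hp1]
  exact measure_mono (Set.subset_univ E)

/-- Single-coordinate independence for the percolation measure. -/
lemma perc_single {p : ℝ} (hp0 : 0 ≤ p) (hp1 : p ≤ 1) (b₀ : Bond d) (t : Bool)
    {H : Set (Config d)} (hH : MeasurableSet H)
    (hdet : ∀ ω ω' : Config d, (∀ b, b ≠ b₀ → ω b = ω' b) → (ω ∈ H ↔ ω' ∈ H)) :
    percMeasure d p ({ω | ω b₀ = t} ∩ H) = wB p t * percMeasure d p H := by
  have hcoord : MeasurableSet {ω : Config d | ω b₀ = t} := measurableSet_coord b₀ t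
  rw [percMeasure_apply p (hcoord.inter hH), percMeasure_apply p hH]
  have hpre : reindexC d ⁻¹' ({ω | ω b₀ = t} ∩ H) =
      {s : ℕ → Bool | s (Encodable.encode b₀) = t} ∩ (reindexC d ⁻¹' H) := rfl
  rw [hpre]
  refine seq_single hp0 hp1 (Encodable.encode b₀) t _ (measurable_reindexC hH) ?_
  intro s s' hag
  refine hdet (reindexC d s) (reindexC d s') ?_
  intro b hb
  exact hag (Encodable.encode b) (fun h => hb (Encodable.encode_injective h))

/-- Decomposition of the percolation measure over a single coordinate. -/
lemma perc_decomp {p : ℝ} (hp0 : 0 ≤ p) (hp1 : p ≤ 1) (b₀ : Bond d)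
    {V : Set (Config d)} (hV : MeasurableSet V) :
    percMeasure d p V =
      wB p true * percMeasure d p ((fun ω => Function.update ω b₀ true) ⁻¹' V) +
      wB p false * percMeasure d p ((fun ω => Function.update ω b₀ false) ⁻¹' V) := by
  have hkey : ∀ t : Bool, {ω : Config d | ω b₀ = t} ∩ V =
      {ω | ω b₀ = t} ∩ ((fun ω => Function.update ω b₀ t) ⁻¹' V) := by
    intro t
    ext ω
    simp only [Set.mem_inter_iff, Set.mem_setOf_eq, Set.mem_preimage]
    constructor
    · rintro ⟨h0, hv⟩
      refine ⟨h0, ?_⟩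
      rw [← h0, Function.update_eq_self]
      exact hv
    · rintro ⟨h0, hv⟩
      refine ⟨h0, ?_⟩
      rw [← h0, Function.update_eq_self] at hv
      exact hv
  have hdet : ∀ t : Bool, ∀ ω ω' : Config d, (∀ b, b ≠ b₀ → ω b = ω' b) →
      (ω ∈ (fun ω => Function.update ω b₀ t) ⁻¹' V ↔
        ω' ∈ (fun ω => Function.update ω b₀ t) ⁻¹' V) := by
    intro t ω ω' hag
    have : Function.update ω b₀ t = Function.update ω' b₀ t := by
      funext b
      by_cases hb : b = b₀
      · subst hb; rw [Function.update_self, Function.update_self]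
      · rw [Function.update_of_ne hb, Function.update_of_ne hb]
        exact hag b hb
    simp only [Set.mem_preimage, this]
  have hmeasu : ∀ t : Bool, MeasurableSet ((fun ω : Config d => Function.update ω b₀ t) ⁻¹' V) :=
    fun t => measurable_update_config b₀ t hV
  have hpart : V = ({ω : Config d | ω b₀ = true} ∩ V) ∪ ({ω | ω b₀ = false} ∩ V) := by
    ext ω
    constructor
    · intro hs
      cases hb : ω b₀
      · exact Or.inr ⟨hb, hs⟩
      · exact Or.inl ⟨hb, hs⟩
    · rintro (⟨-, hs⟩ | ⟨-, hs⟩) <;> exact hs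
  have hdisj : Disjoint ({ω : Config d | ω b₀ = true} ∩ V) ({ω | ω b₀ = false} ∩ V) := by
    rw [Set.disjoint_left]
    rintro ω ⟨h1, -⟩ ⟨h2, -⟩
    simp only [Set.mem_setOf_eq] at h1 h2
    rw [h1] at h2
    exact Bool.noConfusion h2
  conv_lhs => rw [hpart]
  rw [measure_union hdisj ((measurableSet_coord b₀ false).inter hV),
    hkey true, hkey false,
    perc_single hp0 hp1 b₀ true (hmeasu true) (hdet true),
    perc_single hp0 hp1 b₀ false (hmeasu false) (hdet false)]

end CuttingConfig

section CuttingMono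

variable {d : ℕ}

/-- `W` is determined by the coordinates in `F`. -/
def DetBy (W : Set (Config d)) (F : Finset (Bond d)) : Prop :=
  ∀ ω ω' : Config d, (∀ b ∈ F, ω b = ω' b) → (ω ∈ W → ω' ∈ W)

lemma detBy_const {F : Finset (Bond d)} {W : Set (Config d)} (h : DetBy W ∅) :
    W = ∅ ∨ W = Set.univ := by
  by_cases hne : W.Nonempty
  · obtain ⟨ω₀, h₀⟩ := hne
    exact Or.inr (Set.eq_univ_of_forall fun ω => h ω₀ ω (by simp) h₀)
  · exact Or.inl (Set.not_nonempty_iff_eq_empty.mp hne)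

lemma detBy_update {W : Set (Config d)} {F : Finset (Bond d)} {b₀ : Bond d}
    (h : DetBy W (insert b₀ F)) (t : Bool) :
    DetBy ((fun ω => Function.update ω b₀ t) ⁻¹' W) F := by
  intro ω ω' hag hmem
  refine h (Function.update ω b₀ t) (Function.update ω' b₀ t) ?_ hmem
  intro b hb
  rcases Finset.mem_insert.mp hb with hb' | hb'
  · subst hb'; rw [Function.update_self, Function.update_self]
  · by_cases hbb : b = b₀
    · subst hbb; rw [Function.update_self, Function.update_self]
    · rw [Function.update_of_ne hbb, Function.update_of_ne hbb]; exact hag b hb'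

/-- An increasing event determined by finitely many bonds is monotone in `p`. -/
lemma perc_mono_param {p q : ℝ} (hp0 : 0 ≤ p) (hpq : p ≤ q) (hq1 : q ≤ 1)
    (F : Finset (Bond d)) :
    ∀ (V : Set (Config d)), MeasurableSet V → DetBy V F →
    (∀ ω ω' : Config d, (∀ b, ω b = true → ω' b = true) → ω ∈ V → ω' ∈ V) →
    percMeasure d p V ≤ percMeasure d q V := by
  have hq0 : 0 ≤ q := le_trans hp0 hpq
  have hp1 : p ≤ 1 := le_trans hpq hq1
  induction F using Finset.induction with
  | empty =>
    intro V hV hdet hmono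
    rcases detBy_const (F := ∅) hdet with h | h
    · simp [h]
    · rw [h, percMeasure_univ p hp0 hp1, percMeasure_univ q hq0 hq1]
  | @insert b₀ F hb₀ ih =>
    intro V hV hdet hmono
    have hmeasu : ∀ t : Bool,
        MeasurableSet ((fun ω : Config d => Function.update ω b₀ t) ⁻¹' V) :=
      fun t => measurable_update_config b₀ t hV
    have hmono' : ∀ t : Bool, ∀ ω ω' : Config d, (∀ b, ω b = true → ω' b = true) →
        ω ∈ (fun ω => Function.update ω b₀ t) ⁻¹' V →
        ω' ∈ (fun ω => Function.update ω b₀ t) ⁻¹' V := by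
      intro t ω ω' hle hmem
      refine hmono _ _ ?_ hmem
      intro bb hbb'
      by_cases hbb : bb = b₀
      · subst hbb; simp only [Function.update_self] at hbb' ⊢; exact hbb'
      · simp only [Function.update_of_ne hbb] at hbb' ⊢; exact hle bb hbb' 
    have hsub : ((fun ω : Config d => Function.update ω b₀ false) ⁻¹' V) ⊆
        ((fun ω : Config d => Function.update ω b₀ true) ⁻¹' V) := by
      intro ω hω
      refine hmono _ _ ?_ hω
      intro bb hbb'
      by_cases hbb : bb = b₀
      · subst hbb; simp only [Function.update_self]
      · simp only [Function.update_of_ne hbb] at hbb' ⊢; exact hbb' 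
    have h1 := ih _ (hmeasu true) (detBy_update hdet true) (hmono' true)
    have h2 := ih _ (hmeasu false) (detBy_update hdet false) (hmono' false)
    have h3 : percMeasure d q ((fun ω : Config d => Function.update ω b₀ false) ⁻¹' V) ≤
        percMeasure d q ((fun ω : Config d => Function.update ω b₀ true) ⁻¹' V) :=
      measure_mono hsub
    rw [perc_decomp hp0 hp1 b₀ hV, perc_decomp hq0 hq1 b₀ hV]
    set aP := percMeasure d p ((fun ω : Config d => Function.update ω b₀ true) ⁻¹' V)
    set bP := percMeasure d p ((fun ω : Config d => Function.update ω b₀ false) ⁻¹' V)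
    set aQ := percMeasure d q ((fun ω : Config d => Function.update ω b₀ true) ⁻¹' V)
    set bQ := percMeasure d q ((fun ω : Config d => Function.update ω b₀ false) ⁻¹' V)
    have e1 : ENNReal.ofReal q = ENNReal.ofReal p + ENNReal.ofReal (q - p) := by
      rw [← ENNReal.ofReal_add hp0 (by linarith)]; ring_nf
    have e2 : ENNReal.ofReal (1 - p) = ENNReal.ofReal (1 - q) + ENNReal.ofReal (q - p) := by
      rw [← ENNReal.ofReal_add (by linarith) (by linarith)]; ring_nf
    have hwt : wB p true = ENNReal.ofReal p := rfl
    have hwf : wB p false = ENNReal.ofReal (1 - p) := rfl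
    have hwtq : wB q true = ENNReal.ofReal q := rfl
    have hwfq : wB q false = ENNReal.ofReal (1 - q) := rfl
    rw [hwt, hwf, hwtq, hwfq, e1, e2, add_mul, add_mul]
    have step1 : ENNReal.ofReal p * aP +
          (ENNReal.ofReal (1 - q) * bP + ENNReal.ofReal (q - p) * bP) ≤
        ENNReal.ofReal p * aQ + (ENNReal.ofReal (1 - q) * bQ + ENNReal.ofReal (q - p) * aQ) := by
      refine add_le_add (mul_le_mul_right h1 _) (add_le_add (mul_le_mul_right h2 _) ?_)
      exact mul_le_mul_right (le_trans h2 h3) _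
    refine le_trans step1 (le_of_eq ?_)
    ring

end CuttingMono

section CuttingTranslate

variable {d : ℕ}

/-- Translation of configurations. -/
def translateC (t : Vertex d) : Config d → Config d := fun ω b => ω (b.1 - t, b.2)

lemma measurable_translateC (t : Vertex d) : Measurable (translateC t) :=
  measurable_pi_lambda _ (fun b => measurable_pi_apply _)

lemma translate_update (t : Vertex d) (ω : Config d) (b : Bond d) (s : Bool) :
    translateC t (Function.update ω (b.1 - t, b.2) s) =
      Function.update (translateC t ω) b s := by
  funext b'
  show Function.update ω (b.1 - t, b.2) s (b'.1 - t, b'.2) = _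
  by_cases hb : b' = b
  · subst hb
    rw [Function.update_self, Function.update_self]
  · have hne : (b'.1 - t, b'.2) ≠ (b.1 - t, b.2) := by
      intro h
      rw [Prod.mk.injEq] at h
      apply hb
      have h3 : b'.1 = b.1 := by
        have := congrArg (fun z => z + t) h.1
        simpa using this
      exact Prod.ext_iff.mpr ⟨h3, h.2⟩
    rw [Function.update_of_ne hne, Function.update_of_ne hb]
    rfl

lemma perc_translate {p : ℝ} (hp0 : 0 ≤ p) (hp1 : p ≤ 1) (tv : Vertex d)
    (F : Finset (Bond d)) :
    ∀ (V : Set (Config d)), MeasurableSet V → DetBy V F →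
    percMeasure d p (translateC tv ⁻¹' V) = percMeasure d p V := by
  induction F using Finset.induction with
  | empty =>
    intro V hV hdet
    rcases detBy_const (F := ∅) hdet with h | h <;> simp [h]
  | @insert b₀ F hb₀ ih =>
    intro V hV hdet
    have hpre : ∀ s : Bool,
        ((fun ω => Function.update ω (b₀.1 - tv, b₀.2) s) ⁻¹' (translateC tv ⁻¹' V)) =
        translateC tv ⁻¹' ((fun ω => Function.update ω b₀ s) ⁻¹' V) := by
      intro s; ext ω
      simp only [Set.mem_preimage]
      rw [translate_update tv ω b₀ s]
    rw [perc_decomp hp0 hp1 (b₀.1 - tv, b₀.2) (measurable_translateC tv hV),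
      hpre true, hpre false,
      ih _ (measurable_update_config b₀ true hV) (detBy_update hdet true),
      ih _ (measurable_update_config b₀ false hV) (detBy_update hdet false),
      ← perc_decomp hp0 hp1 b₀ hV]

lemma occ_translate (t : Vertex d) (ω : Config d) (a c : Vertex d) :
    Occ (translateC t ω) a c ↔ Occ ω (a - t) (c - t) := by
  constructor
  · rintro (⟨i, h1, h2⟩ | ⟨i, h1, h2⟩)
    · exact Or.inl ⟨i, by rw [h1]; abel, h2⟩
    · exact Or.inr ⟨i, by rw [h1]; abel, h2⟩
  · rintro (⟨i, h1, h2⟩ | ⟨i, h1, h2⟩)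
    · refine Or.inl ⟨i, ?_, h2⟩
      have := congrArg (fun z => z + t) h1
      rw [sub_add_cancel] at this
      rw [this]; abel
    · refine Or.inr ⟨i, ?_, h2⟩
      have := congrArg (fun z => z + t) h1
      rw [sub_add_cancel] at this
      rw [this]; abel

lemma conn_translate (t : Vertex d) (ω : Config d) (a c : Vertex d) :
    Conn (translateC t ω) a c ↔ Conn ω (a - t) (c - t) := by
  constructor
  · intro h
    induction h with
    | refl => exact Relation.ReflTransGen.refl
    | @tail b c' hp hstep ih =>
      exact ih.tail ((occ_translate t ω b c').mp hstep)
  · intro h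
    have main : ∀ c' : Vertex d, Relation.ReflTransGen (Occ ω) (a - t) c' →
        Conn (translateC t ω) a (c' + t) := by
      intro c' h'
      induction h' with
      | refl =>
        have h0 : a - t + t = a := sub_add_cancel a t
        rw [h0]
        exact Relation.ReflTransGen.refl
      | @tail b c'' hp hstep ih =>
        refine ih.tail ?_
        rw [occ_translate t ω (b + t) (c'' + t)]
        simpa using hstep
    have := main (c - t) h
    rwa [sub_add_cancel] at this

end CuttingTranslate

section CuttingBall

variable {d : ℕ}

def ballV (x : Vertex d) (n : ℕ) : Set (Vertex d) := {z | norm1 (z - x) ≤ (n : ℤ)}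

lemma norm1_basis (i : Fin d) : norm1 (basis (d := d) i) = 1 := by
  unfold norm1
  rw [Finset.sum_eq_single i]
  · simp [basis]
  · intro j _ hj
    simp [basis, hj]
  · intro h
    exact absurd (Finset.mem_univ i) h

lemma norm1_neg (w : Vertex d) : norm1 (-w) = norm1 w := by
  unfold norm1
  refine Finset.sum_congr rfl (fun i _ => ?_)
  simp [abs_neg]

lemma norm1_occ {ω : Config d} {a c : Vertex d} (h : Occ ω a c) : norm1 (c - a) = 1 := by
  rcases h with ⟨i, h1, _⟩ | ⟨i, h1, _⟩
  · have : c - a = basis i := by rw [h1]; abel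
    rw [this]; exact norm1_basis i
  · have : c - a = -basis i := by rw [h1]; abel
    rw [this, norm1_neg]; exact norm1_basis i

lemma norm1_step (x b c : Vertex d) : norm1 (c - x) ≤ norm1 (b - x) + norm1 (c - b) := by
  unfold norm1
  rw [← Finset.sum_add_distrib]
  refine Finset.sum_le_sum (fun i _ => ?_)
  have h : (c - x) i = (b - x) i + (c - b) i := by
    simp only [Pi.sub_apply]; ring
  rw [h]; exact abs_add_le _ _

lemma ballV_finite (x : Vertex d) (n : ℕ) : (ballV x n).Finite := by
  have hsub : ballV x n ⊆ Set.pi Set.univ (fun i => Set.Icc (x i - n) (x i + n)) := by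
    intro z hz i _
    have hle : |z i - x i| ≤ norm1 (z - x) := by
      have h := Finset.single_le_sum (f := fun j => |(z - x) j|)
        (fun j _ => abs_nonneg _) (Finset.mem_univ i)
      simpa [Pi.sub_apply, norm1] using h
    have habs : |z i - x i| ≤ (n : ℤ) := le_trans hle hz
    rw [abs_le] at habs
    rw [Set.mem_Icc]
    constructor <;> linarith [habs.1, habs.2]
  exact (Set.Finite.pi (fun i => Set.finite_Icc _ _)).subset hsub

lemma restrictS_mono_config {ω ω' : Config d} (hle : ∀ b, ω b = true → ω' b = true)
    (S : Set (Vertex d)) :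
    ∀ b, restrictS ω S b = true → restrictS ω' S b = true := by
  intro b h
  unfold restrictS at h ⊢
  by_cases h1 : b.1 ∈ S ∧ bsnd b ∈ S
  · rw [if_pos h1] at h
    rw [if_pos h1]
    exact hle b h
  · rw [if_neg h1] at h
    exact absurd h (by simp)

lemma restrictS_mono_set {S S' : Set (Vertex d)} (hss : S ⊆ S') (ω : Config d) :
    ∀ b, restrictS ω S b = true → restrictS ω S' b = true := by
  intro b h
  unfold restrictS at h ⊢
  by_cases h1 : b.1 ∈ S ∧ bsnd b ∈ S
  · rw [if_pos h1] at h
    rw [if_pos ⟨hss h1.1, hss h1.2⟩]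
    exact h
  · rw [if_neg h1] at h
    exact absurd h (by simp)

/-- Finite-range approximations of the connection event. -/
noncomputable def connApprox (x z : Vertex d) (n : ℕ) : Set (Config d) :=
  {ω | Conn (restrictS ω (ballV x n)) x z}

lemma measurable_restrictS_map (S : Set (Vertex d)) :
    Measurable (fun ω : Config d => restrictS ω S) := by
  refine measurable_pi_lambda _ (fun b => ?_)
  unfold restrictS
  by_cases hb : b.1 ∈ S ∧ bsnd b ∈ S
  · simp only [if_pos hb]; exact measurable_pi_apply b
  · simp only [if_neg hb]; exact measurable_const

lemma measurableSet_connApprox (x z : Vertex d) (n : ℕ) :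
    MeasurableSet (connApprox x z n) :=
  measurable_restrictS_map (ballV x n) (measurableSet_conn x z)

lemma connApprox_subset (x z : Vertex d) {n m : ℕ} (hnm : n ≤ m) :
    connApprox x z n ⊆ connApprox x z m := by
  intro ω hω
  refine conn_mono (restrictS_mono_set ?_ ω) hω
  intro w hw
  have hw' : norm1 (w - x) ≤ (n : ℤ) := hw
  show norm1 (w - x) ≤ (m : ℤ)
  exact le_trans hw' (by exact_mod_cast hnm)

lemma iUnion_connApprox (x z : Vertex d) :
    (⋃ n, connApprox x z n) = {ω | Conn ω x z} := by
  apply Set.Subset.antisymm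
  · refine Set.iUnion_subset (fun n ω hω => ?_)
    exact conn_mono (restrictS_le ω _) hω
  · intro ω hω
    have main : ∀ z', Conn ω x z' →
        ∃ n : ℕ, Conn (restrictS ω (ballV x n)) x z' ∧ norm1 (z' - x) ≤ (n : ℤ) := by
      intro z' h
      induction h with
      | refl =>
        refine ⟨0, Relation.ReflTransGen.refl, ?_⟩
        have : x - x = (0 : Vertex d) := by abel
        rw [this]
        simp [norm1]
      | @tail b c hp hstep ih =>
        obtain ⟨n, hconn, hdist⟩ := ih
        have hstep1 := norm1_occ hstep
        have htri := norm1_step x b c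
        have hb : b ∈ ballV x (n + 1) := by
          show norm1 (b - x) ≤ ((n + 1 : ℕ) : ℤ)
          push_cast
          linarith
        have hc : c ∈ ballV x (n + 1) := by
          show norm1 (c - x) ≤ ((n + 1 : ℕ) : ℤ)
          push_cast
          linarith
        refine ⟨n + 1, ?_, by push_cast; linarith⟩
        refine Relation.ReflTransGen.tail ?_ (occ_restrictS.mpr ⟨hstep, hb, hc⟩)
        refine conn_mono (restrictS_mono_set ?_ ω) hconn
        intro w hw
        have hw' : norm1 (w - x) ≤ (n : ℤ) := hw
        show norm1 (w - x) ≤ ((n + 1 : ℕ) : ℤ)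
        refine le_trans hw' ?_
        exact_mod_cast Nat.le_succ n
    obtain ⟨n, hconn, -⟩ := main z hω
    exact Set.mem_iUnion.mpr ⟨n, hconn⟩

noncomputable def ballBonds (x : Vertex d) (n : ℕ) : Finset (Bond d) :=
  ((ballV_finite x n).toFinset) ×ˢ (Finset.univ : Finset (Fin d))

lemma connApprox_detBy (x z : Vertex d) (n : ℕ) :
    DetBy (connApprox x z n) (ballBonds x n) := by
  intro ω ω' hag hmem
  have hres : restrictS ω (ballV x n) = restrictS ω' (ballV x n) := by
    funext b
    unfold restrictS
    by_cases hb : b.1 ∈ ballV x n ∧ bsnd b ∈ ballV x n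
    · rw [if_pos hb, if_pos hb]
      exact hag b (Finset.mem_product.mpr
        ⟨(ballV_finite x n).mem_toFinset.mpr hb.1, Finset.mem_univ _⟩)
    · rw [if_neg hb, if_neg hb]
  show Conn (restrictS ω' (ballV x n)) x z
  rw [← hres]
  exact hmem

lemma connApprox_monoConfig (x z : Vertex d) (n : ℕ) :
    ∀ ω ω' : Config d, (∀ b, ω b = true → ω' b = true) →
      ω ∈ connApprox x z n → ω' ∈ connApprox x z n := by
  intro ω ω' hle h
  exact conn_mono (restrictS_mono_config hle (ballV x n)) h

lemma perc_connApprox_translate {p : ℝ} (hp0 : 0 ≤ p) (hp1 : p ≤ 1) (x z : Vertex d) (n : ℕ) :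
    percMeasure d p (connApprox x z n) = percMeasure d p (connApprox 0 (z - x) n) := by
  have hset : connApprox x z n = translateC (-x) ⁻¹' (connApprox 0 (z - x) n) := by
    ext ω
    simp only [Set.mem_preimage, connApprox, Set.mem_setOf_eq]
    have hres : restrictS (translateC (-x) ω) (ballV 0 n) =
        translateC (-x) (restrictS ω (ballV x n)) := by
      funext b
      show restrictS (translateC (-x) ω) (ballV 0 n) b
          = restrictS ω (ballV x n) (b.1 - -x, b.2)
      unfold restrictS translateC
      have hcond : (b.1 ∈ ballV 0 n ∧ bsnd b ∈ ballV 0 n) ↔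
          ((b.1 - -x, b.2).1 ∈ ballV x n ∧ bsnd (b.1 - -x, b.2) ∈ ballV x n) := by
        unfold ballV bsnd
        simp only [Set.mem_setOf_eq]
        constructor
        · rintro ⟨h1, h2⟩
          constructor
          · have : b.1 - -x - x = b.1 - 0 := by abel
            rw [this]; exact h1
          · have : b.1 - -x + basis b.2 - x = b.1 + basis b.2 - 0 := by abel
            rw [this]; exact h2
        · rintro ⟨h1, h2⟩
          constructor
          · have : b.1 - 0 = b.1 - -x - x := by abel
            rw [this]; exact h1
          · have : b.1 + basis b.2 - 0 = b.1 - -x + basis b.2 - x := by abel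
            rw [this]; exact h2
      by_cases hc : b.1 ∈ ballV 0 n ∧ bsnd b ∈ ballV 0 n
      · rw [if_pos hc, if_pos (hcond.mp hc)]
      · rw [if_neg hc, if_neg (fun hh => hc (hcond.mpr hh))]
    rw [hres, conn_translate]
    have e1 : (0 : Vertex d) - -x = x := by abel
    have e2 : z - x - -x = z := by abel
    rw [e1, e2]
  rw [hset]
  exact perc_translate hp0 hp1 (-x) (ballBonds 0 n) _
    (measurableSet_connApprox 0 (z - x) n) (connApprox_detBy 0 (z - x) n)

lemma perc_conn_eq_tauE {p : ℝ} (hp0 : 0 ≤ p) (hp1 : p ≤ 1) (x z : Vertex d) :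
    percMeasure d p {ω : Config d | Conn ω x z} = tauE d p (z - x) := by
  have h1 : {ω : Config d | Conn ω x z} = ⋃ n, connApprox x z n :=
    (iUnion_connApprox x z).symm
  have h2 : {ω : Config d | Conn ω 0 (z - x)} = ⋃ n, connApprox 0 (z - x) n :=
    (iUnion_connApprox 0 (z - x)).symm
  have hmono1 : Monotone (connApprox x z) := fun n m hnm => connApprox_subset x z hnm
  have hmono2 : Monotone (connApprox 0 (z - x)) := fun n m hnm => connApprox_subset _ _ hnm
  rw [tauE, h1, h2, hmono1.measure_iUnion,
    hmono2.measure_iUnion]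
  exact iSup_congr (fun n => perc_connApprox_translate hp0 hp1 x z n)

lemma tauE_mono_param {p q : ℝ} (hp0 : 0 ≤ p) (hpq : p ≤ q) (hq1 : q ≤ 1) (z : Vertex d) :
    tauE d p z ≤ tauE d q z := by
  have h2 : {ω : Config d | Conn ω 0 z} = ⋃ n, connApprox 0 z n :=
    (iUnion_connApprox 0 z).symm
  have hmono : Monotone (connApprox 0 z) := fun n m hnm => connApprox_subset _ _ hnm
  rw [tauE, tauE, h2, hmono.measure_iUnion,
    hmono.measure_iUnion]
  refine iSup_mono (fun n => ?_)
  exact perc_mono_param hp0 hpq hq1 (ballBonds 0 n) _ (measurableSet_connApprox 0 z n)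
    (connApprox_detBy 0 z n) (connApprox_monoConfig 0 z n)

end CuttingBall

section CuttingCluster

variable {d : ℕ}

lemma chi_mono_param {p q : ℝ} (hp0 : 0 ≤ p) (hpq : p ≤ q) (hq1 : q ≤ 1) :
    chi d p ≤ chi d q :=
  ENNReal.tsum_le_tsum (fun z => tauE_mono_param hp0 hpq hq1 z)

lemma tildeC_subset_cluster (ω : Config d) (u v x : Vertex d) :
    tildeC ω u v x ⊆ {z | Conn ω x z} := fun _ hz => conn_of_mem_tildeC hz

lemma cluster_infinite_null {p q : ℝ} (hp0 : 0 ≤ p) (hpq : p ≤ q) (hq1 : q ≤ 1)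
    (hchi : chi d q < ⊤) (x : Vertex d) :
    percMeasure d p {ω : Config d | {z : Vertex d | Conn ω x z}.Infinite} = 0 := by
  have hp1 : p ≤ 1 := le_trans hpq hq1
  set f : Config d → ℝ≥0∞ :=
    fun ω => ∑' z : Vertex d, Set.indicator {ω' : Config d | Conn ω' x z} 1 ω with hf
  have hmeasz : ∀ z : Vertex d,
      Measurable (Set.indicator {ω' : Config d | Conn ω' x z} (1 : Config d → ℝ≥0∞)) :=
    fun z => measurable_const.indicator (measurableSet_conn x z)
  have hmeasf : Measurable f := Measurable.ennreal_tsum hmeasz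
  have hint : ∫⁻ ω, f ω ∂(percMeasure d p) =
      ∑' z : Vertex d, percMeasure d p {ω | Conn ω x z} := by
    rw [hf, lintegral_tsum (fun z => (hmeasz z).aemeasurable)]
    refine tsum_congr (fun z => ?_)
    rw [lintegral_indicator (measurableSet_conn x z)]
    exact MeasureTheory.setLIntegral_one _
  have hlt : ∫⁻ ω, f ω ∂(percMeasure d p) < ⊤ := by
    rw [hint]
    have h1 : ∑' z : Vertex d, percMeasure d p {ω | Conn ω x z} =
        ∑' z : Vertex d, tauE d p (z - x) :=
      tsum_congr (fun z => perc_conn_eq_tauE hp0 hp1 x z)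
    have h2 : ∑' z : Vertex d, tauE d p (z - x) = ∑' w : Vertex d, tauE d p w :=
      (Equiv.subRight x).tsum_eq (tauE d p)
    rw [h1, h2]
    calc ∑' w : Vertex d, tauE d p w = chi d p := rfl
      _ ≤ chi d q := chi_mono_param hp0 hpq hq1
      _ < ⊤ := hchi
  have hae := ae_lt_top hmeasf hlt.ne
  rw [ae_iff] at hae
  refine measure_mono_null ?_ hae
  intro ω hω
  show ¬ f ω < ⊤
  rw [not_lt, top_le_iff]
  by_contra hne
  have hfin := ENNReal.finite_const_le_of_tsum_ne_top
    (a := fun z : Vertex d => Set.indicator {ω' : Config d | Conn ω' x z} 1 ω) hne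
    (ε := 1) one_ne_zero
  refine hω (hfin.subset ?_)
  intro z hz
  show (1 : ℝ≥0∞) ≤ Set.indicator {ω' : Config d | Conn ω' x z} 1 ω
  have hmem : ω ∈ {ω' : Config d | Conn ω' x z} := hz
  rw [Set.indicator_of_mem hmem (1 : Config d → ℝ≥0∞)]
  exact le_refl 1

end CuttingCluster

section CuttingIndep

variable {d : ℕ}

lemma detBy_update_iff {W : Set (Config d)} {F : Finset (Bond d)} {b₀ : Bond d}
    (h : ∀ ω ω' : Config d, (∀ b ∈ insert b₀ F, ω b = ω' b) → (ω ∈ W ↔ ω' ∈ W)) (t : Bool) :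
    ∀ ω ω' : Config d, (∀ b ∈ F, ω b = ω' b) →
      (ω ∈ (fun ω => Function.update ω b₀ t) ⁻¹' W ↔
        ω' ∈ (fun ω => Function.update ω b₀ t) ⁻¹' W) := by
  intro ω ω' hag
  refine h (Function.update ω b₀ t) (Function.update ω' b₀ t) ?_
  intro b hb
  by_cases hbb : b = b₀
  · subst hbb; rw [Function.update_self, Function.update_self]
  · rw [Function.update_of_ne hbb, Function.update_of_ne hbb]
    exact hag b (Finset.mem_insert.mp hb |>.resolve_left hbb)

/-- Independence of an event determined by the bonds in `F` from an event determined
by the bonds outside `F`. -/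
lemma perc_indep {p : ℝ} (hp0 : 0 ≤ p) (hp1 : p ≤ 1) (F : Finset (Bond d)) :
    ∀ (Wset : Set (Config d)), MeasurableSet Wset →
    (∀ ω ω' : Config d, (∀ b ∈ F, ω b = ω' b) → (ω ∈ Wset ↔ ω' ∈ Wset)) →
    ∀ (H : Set (Config d)), MeasurableSet H →
    (∀ ω ω' : Config d, (∀ b ∉ F, ω b = ω' b) → (ω ∈ H ↔ ω' ∈ H)) →
    percMeasure d p (Wset ∩ H) = percMeasure d p Wset * percMeasure d p H := by
  induction F using Finset.induction with
  | empty =>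
    intro Wset hmW hdetW H hmH hdetH
    have hconst : DetBy Wset ∅ := fun ω ω' hag h =>
      (hdetW ω ω' (fun b hb => absurd hb (Finset.notMem_empty b))).mp h
    rcases detBy_const (F := ∅) hconst with h | h
    · rw [h]; simp
    · rw [h, Set.univ_inter, percMeasure_univ p hp0 hp1, one_mul]
  | @insert b₀ F hb₀ ih =>
    intro Wset hmW hdetW H hmH hdetH
    have hmWt : ∀ t : Bool,
        MeasurableSet ((fun ω : Config d => Function.update ω b₀ t) ⁻¹' Wset) :=
      fun t => measurable_update_config b₀ t hmW
    have hdetWt := detBy_update_iff hdetW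
    have hdetHF : ∀ ω ω' : Config d, (∀ b ∉ F, ω b = ω' b) → (ω ∈ H ↔ ω' ∈ H) := by
      intro ω ω' hag
      refine hdetH ω ω' (fun b hb => hag b ?_)
      intro hbF
      exact hb (Finset.mem_insert_of_mem hbF)
    have hdetHb : ∀ ω ω' : Config d, (∀ b, b ≠ b₀ → ω b = ω' b) → (ω ∈ H ↔ ω' ∈ H) := by
      intro ω ω' hag
      refine hdetH ω ω' (fun b hb => hag b ?_)
      intro hbb
      subst hbb
      exact hb (Finset.mem_insert_self b F)
    have hsplit : ∀ t : Bool, {ω : Config d | ω b₀ = t} ∩ (Wset ∩ H) =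
        {ω | ω b₀ = t} ∩
          (((fun ω => Function.update ω b₀ t) ⁻¹' Wset) ∩ H) := by
      intro t
      ext ω
      simp only [Set.mem_inter_iff, Set.mem_setOf_eq, Set.mem_preimage]
      constructor
      · rintro ⟨h0, h1, h2⟩
        refine ⟨h0, ?_, h2⟩
        rw [← h0, Function.update_eq_self]
        exact h1
      · rintro ⟨h0, h1, h2⟩
        refine ⟨h0, ?_, h2⟩
        rw [← h0, Function.update_eq_self] at h1
        exact h1
    have hdetWtb : ∀ t : Bool, ∀ ω ω' : Config d, (∀ b, b ≠ b₀ → ω b = ω' b) →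
        (ω ∈ ((fun ω => Function.update ω b₀ t) ⁻¹' Wset) ∩ H ↔
          ω' ∈ ((fun ω => Function.update ω b₀ t) ⁻¹' Wset) ∩ H) := by
      intro t ω ω' hag
      have h1 : Function.update ω b₀ t = Function.update ω' b₀ t := by
        funext b
        by_cases hbb : b = b₀
        · subst hbb; rw [Function.update_self, Function.update_self]
        · rw [Function.update_of_ne hbb, Function.update_of_ne hbb]
          exact hag b hbb
      simp only [Set.mem_inter_iff, Set.mem_preimage, h1]
      exact and_congr Iff.rfl (hdetHb ω ω' hag)
    have hpart : Wset ∩ H =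
        ({ω : Config d | ω b₀ = true} ∩ (Wset ∩ H)) ∪
        ({ω | ω b₀ = false} ∩ (Wset ∩ H)) := by
      ext ω
      constructor
      · intro hs
        cases hb : ω b₀
        · exact Or.inr ⟨hb, hs⟩
        · exact Or.inl ⟨hb, hs⟩
      · rintro (⟨-, hs⟩ | ⟨-, hs⟩) <;> exact hs
    have hdisj : Disjoint ({ω : Config d | ω b₀ = true} ∩ (Wset ∩ H))
        ({ω | ω b₀ = false} ∩ (Wset ∩ H)) := by
      rw [Set.disjoint_left]
      rintro ω ⟨h1, -⟩ ⟨h2, -⟩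
      simp only [Set.mem_setOf_eq] at h1 h2
      rw [h1] at h2
      exact Bool.noConfusion h2
    have hcalc : ∀ t : Bool, percMeasure d p ({ω : Config d | ω b₀ = t} ∩ (Wset ∩ H)) =
        wB p t * (percMeasure d p ((fun ω => Function.update ω b₀ t) ⁻¹' Wset) *
          percMeasure d p H) := by
      intro t
      rw [hsplit t,
        perc_single hp0 hp1 b₀ t ((hmWt t).inter hmH) (hdetWtb t),
        ih _ (hmWt t) (hdetWt t) H hmH hdetHF]
    conv_lhs => rw [hpart]
    rw [measure_union hdisj ((measurableSet_coord b₀ false).inter (hmW.inter hmH)),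
      hcalc true, hcalc false,
      perc_decomp hp0 hp1 b₀ hmW]
    ring

end CuttingIndep

/-- **Cutting lemma** (Lemma 3.2): for a directed nearest-neighbour bond `b = (u, v)`,
`ℙ_p(E(x, b, y; A)) = p·𝔼₀[𝟙{E'(x, u; A)} 𝟙{v ∉ C̃^b(x)} ℙ₁(v ↔ y off C̃^b(x))]`, where
the inner probability is over a second, independent configuration, with the cluster
`C̃^b(x)` of the outer configuration treated as a fixed vertex set. -/
theorem cutting_lemma (d : ℕ) (hd : 2 ≤ d) (p : ℝ) (hp0 : 0 ≤ p) (hp : p < pc d)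
    (x y : Vertex d) (A : Set (Vertex d)) (u v : Vertex d)
    (huv : norm1 (u - v) = 1) :
    (percMeasure d p {ω | Eev ω x u v y A}).toReal =
      p * ∫ ω₀,
        Set.indicator {ω' : Config d | Eprime ω' x u A ∧ v ∉ tildeC ω' u v x}
          (fun ω' => (percMeasure d p {ω₁ | ConnOff ω₁ (tildeC ω' u v x) v y}).toReal)
          ω₀ ∂(percMeasure d p) := by
  classical
  -- Subcriticality data
  have hSne : {r : ℝ | r ∈ Set.Icc (0:ℝ) 1 ∧ chi d r < ⊤}.Nonempty := by
    by_contra h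
    rw [Set.not_nonempty_iff_eq_empty] at h
    have hpc : pc d = 0 := by rw [pc, h, Real.sSup_empty]
    rw [hpc] at hp
    linarith
  obtain ⟨q, hqmem, hpq⟩ := exists_lt_of_lt_csSup hSne hp
  have hq1 : q ≤ 1 := hqmem.1.2
  have hchiq : chi d q < ⊤ := hqmem.2
  have hp1 : p ≤ 1 := le_trans hpq.le hq1
  obtain ⟨β, hβ⟩ := exists_edgeIs huv
  -- Events
  set g : Set (Vertex d) → ℝ≥0∞ :=
    fun S₀ => percMeasure d p {ω₁ : Config d | ConnOff ω₁ S₀ v y} with hgdef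
  set K : Set (Config d) := {ω' : Config d | Eprime ω' x u A ∧ v ∉ tildeC ω' u v x}
    with hKdef
  set W : Finset (Vertex d) → Set (Config d) := fun S₀ =>
    {ω : Config d | tildeC ω u v x = ↑S₀ ∧ Eprime ω x u A ∧
      v ∉ (↑S₀ : Set (Vertex d))} with hWdef
  set HS : Finset (Vertex d) → Set (Config d) :=
    fun S₀ => {ω : Config d | ConnOff ω (↑S₀) v y} with hHSdef
  set D' : Set (Config d) := ⋃ S₀ : Finset (Vertex d), W S₀ ∩ HS S₀ with hD'def
  set Dset : Set (Config d) := K ∩ {ω : Config d | ConnOff ω (tildeC ω u v x) v y}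
    with hDdef
  set Bad : Set (Config d) := {ω : Config d | {z : Vertex d | Conn ω x z}.Infinite}
    with hBaddef
  -- Measurability
  have hKmeas : MeasurableSet K :=
    (measurableSet_eprime A x u).inter (measurableSet_tildeC_mem u v x v).compl
  have hWmeas : ∀ S₀ : Finset (Vertex d), MeasurableSet (W S₀) := by
    intro S₀
    have h1 : {ω : Config d | tildeC ω u v x = ↑S₀} =
        ⋂ w : Vertex d, (if w ∈ S₀ then {ω : Config d | w ∈ tildeC ω u v x}
          else {ω : Config d | w ∈ tildeC ω u v x}ᶜ) := by
      ext ω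
      simp only [Set.mem_setOf_eq, Set.mem_iInter]
      constructor
      · intro h w
        by_cases hw : w ∈ S₀
        · rw [if_pos hw]
          show w ∈ tildeC ω u v x
          rw [h]
          exact Finset.mem_coe.mpr hw
        · rw [if_neg hw]
          show w ∉ tildeC ω u v x
          rw [h]
          exact fun hh => hw (Finset.mem_coe.mp hh)
      · intro h
        apply Set.ext
        intro w
        have hw' := h w
        by_cases hw : w ∈ S₀
        · rw [if_pos hw] at hw'
          exact iff_of_true hw' (Finset.mem_coe.mpr hw)
        · rw [if_neg hw] at hw'
          exact iff_of_false hw' (fun hh => hw (Finset.mem_coe.mp hh))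
    have h2 : W S₀ = {ω : Config d | tildeC ω u v x = ↑S₀} ∩
        ({ω : Config d | Eprime ω x u A} ∩
          {ω : Config d | v ∉ (↑S₀ : Set (Vertex d))}) := rfl
    rw [h2, h1]
    refine MeasurableSet.inter ?_
      ((measurableSet_eprime A x u).inter (MeasurableSet.const _))
    refine MeasurableSet.iInter (fun w => ?_)
    by_cases hw : w ∈ S₀
    · rw [if_pos hw]; exact measurableSet_tildeC_mem u v x w
    · rw [if_neg hw]; exact (measurableSet_tildeC_mem u v x w).compl
  have hHSmeas : ∀ S₀ : Finset (Vertex d), MeasurableSet (HS S₀) :=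
    fun S₀ => measurableSet_connOff _ v y
  have hD'meas : MeasurableSet D' :=
    MeasurableSet.iUnion (fun S₀ => (hWmeas S₀).inter (hHSmeas S₀))
  -- Basic inclusions
  have hWK : ∀ S₀ : Finset (Vertex d), W S₀ ⊆ K := by
    intro S₀ ω hω
    obtain ⟨hS, hE, hv⟩ := hω
    exact ⟨hE, by rw [hS]; exact hv⟩
  have hWdisj : Pairwise (Function.onFun Disjoint
      (fun S₀ : Finset (Vertex d) => W S₀ ∩ HS S₀)) := by
    intro S₀ S₁ hne
    rw [Function.onFun, Set.disjoint_left]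
    rintro ω ⟨⟨h1, -⟩, -⟩ ⟨⟨h2, -⟩, -⟩
    exact hne (Finset.coe_injective (h1.symm.trans h2))
  have hD'sub : D' ⊆ Dset := by
    rintro ω hω
    obtain ⟨S₀, hS₀⟩ := Set.mem_iUnion.mp hω
    obtain ⟨⟨hS, hE, hv⟩, hco⟩ := hS₀
    refine ⟨⟨hE, by rw [hS]; exact hv⟩, ?_⟩
    show ConnOff ω (tildeC ω u v x) v y
    rw [hS]
    exact hco
  have hDdiff : Dset \ D' ⊆ Bad := by
    rintro ω ⟨⟨⟨hE, hv⟩, hco⟩, hnot⟩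
    by_contra hbad
    have hfin : (tildeC ω u v x).Finite :=
      Set.Finite.subset (Set.not_infinite.mp hbad) (tildeC_subset_cluster ω u v x)
    apply hnot
    refine Set.mem_iUnion.mpr ⟨hfin.toFinset, ⟨⟨hfin.coe_toFinset.symm, hE, ?_⟩, ?_⟩⟩
    · rw [hfin.coe_toFinset]
      exact hv
    · show ConnOff ω (↑hfin.toFinset) v y
      rw [hfin.coe_toFinset]
      exact hco
  have hBadnull : percMeasure d p Bad = 0 :=
    cluster_infinite_null hp0 hpq.le hq1 hchiq x
  -- The deterministic identity
  have hEevSet : {ω : Config d | Eev ω x u v y A} =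
      {ω : Config d | ω β = true} ∩ Dset := by
    ext ω
    rw [Set.mem_setOf_eq, eev_iff hβ]
    simp only [hDdef, hKdef, Set.mem_inter_iff, Set.mem_setOf_eq]
    tauto
  -- D' does not depend on the coordinate β
  have hD'upd : ∀ (ω : Config d) (t : Bool), ω ∈ D' → Function.update ω β t ∈ D' := by
    intro ω t hω
    obtain ⟨S₀, hS₀⟩ := Set.mem_iUnion.mp hω
    obtain ⟨⟨hS, hE, hv⟩, hco⟩ := hS₀
    have hv' : v ∉ tildeC ω u v x := by rw [hS]; exact hv
    have hco' : ConnOff ω (tildeC ω u v x) v y := by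
      show ConnOff ω (tildeC ω u v x) v y
      rw [hS]
      exact hco
    have hD := D_pred_update hβ t ⟨hE, hv', hco'⟩
    have htc : tildeC (Function.update ω β t) u v x = ↑S₀ := by
      rw [tildeC_update hβ t, hS]
    refine Set.mem_iUnion.mpr ⟨S₀, ⟨⟨htc, hD.1, hv⟩, ?_⟩⟩
    show ConnOff (Function.update ω β t) (↑S₀) v y
    have h3 := hD.2.2
    rwa [htc] at h3
  have hD'det : ∀ ω ω' : Config d, (∀ b, b ≠ β → ω b = ω' b) → (ω ∈ D' ↔ ω' ∈ D') := by
    intro ω ω' hag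
    have h1 : ω' = Function.update ω β (ω' β) := by
      funext b
      by_cases hb : b = β
      · subst hb; rw [Function.update_self]
      · rw [Function.update_of_ne hb]; exact (hag b hb).symm
    have h2 : ω = Function.update ω' β (ω β) := by
      funext b
      by_cases hb : b = β
      · subst hb; rw [Function.update_self]
      · rw [Function.update_of_ne hb]; exact hag b hb
    constructor
    · intro h
      rw [h1]
      exact hD'upd ω _ h
    · intro h
      rw [h2]
      exact hD'upd ω' _ h
  -- Measure computations
  have hmueq : percMeasure d p ({ω : Config d | ω β = true} ∩ Dset) =
      percMeasure d p ({ω : Config d | ω β = true} ∩ D') := by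
    apply le_antisymm
    · have hsub : {ω : Config d | ω β = true} ∩ Dset ⊆
          ({ω : Config d | ω β = true} ∩ D') ∪ Bad := by
        rintro ω ⟨h1, h2⟩
        by_cases hD : ω ∈ D'
        · exact Or.inl ⟨h1, hD⟩
        · exact Or.inr (hDdiff ⟨h2, hD⟩)
      calc percMeasure d p ({ω : Config d | ω β = true} ∩ Dset)
          ≤ percMeasure d p (({ω : Config d | ω β = true} ∩ D') ∪ Bad) :=
            measure_mono hsub
        _ ≤ percMeasure d p ({ω : Config d | ω β = true} ∩ D') +
            percMeasure d p Bad := measure_union_le _ _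
        _ = percMeasure d p ({ω : Config d | ω β = true} ∩ D') := by
            rw [hBadnull, add_zero]
    · exact measure_mono (Set.inter_subset_inter_right _ hD'sub)
  have hfac : percMeasure d p ({ω : Config d | ω β = true} ∩ D') =
      ENNReal.ofReal p * percMeasure d p D' := by
    rw [perc_single hp0 hp1 β true hD'meas hD'det]
    rfl
  have hD'sum : percMeasure d p D' =
      ∑' S₀ : Finset (Vertex d), percMeasure d p (W S₀ ∩ HS S₀) :=
    measure_iUnion hWdisj (fun S₀ => (hWmeas S₀).inter (hHSmeas S₀))
  have hterm : ∀ S₀ : Finset (Vertex d),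
      percMeasure d p (W S₀ ∩ HS S₀) = percMeasure d p (W S₀) * g ↑S₀ := by
    intro S₀
    have hBSfin : (BS (↑S₀ : Set (Vertex d))).Finite := by
      have hsub : BS (↑S₀ : Set (Vertex d)) ⊆
          ↑(((S₀ ∪ Finset.univ.biUnion
              (fun i : Fin d => S₀.image (fun s => s - basis i)))
            ×ˢ (Finset.univ : Finset (Fin d)))) := by
        rintro b (hb | hb)
        · exact Finset.mem_coe.mpr (Finset.mem_product.mpr
            ⟨Finset.mem_union_left _ (by exact_mod_cast hb), Finset.mem_univ _⟩)
        · refine Finset.mem_coe.mpr (Finset.mem_product.mpr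
            ⟨Finset.mem_union_right _ ?_, Finset.mem_univ _⟩)
          refine Finset.mem_biUnion.mpr ⟨b.2, Finset.mem_univ _, ?_⟩
          refine Finset.mem_image.mpr ⟨b.1 + basis b.2, by exact_mod_cast hb, ?_⟩
          abel
      exact Set.Finite.subset (Finset.finite_toSet _) hsub
    have hWdet : ∀ ω ω' : Config d,
        (∀ b ∈ hBSfin.toFinset, ω b = ω' b) → (ω ∈ W S₀ ↔ ω' ∈ W S₀) := by
      intro ω ω' hag
      have hag' : ∀ b ∈ BS (↑S₀ : Set (Vertex d)), ω b = ω' b :=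
        fun b hb => hag b (hBSfin.mem_toFinset.mpr hb)
      constructor
      · exact fun h => W_congr hag' h
      · exact fun h => W_congr (fun b hb => (hag' b hb).symm) h
    have hHSdet : ∀ ω ω' : Config d,
        (∀ b ∉ hBSfin.toFinset, ω b = ω' b) → (ω ∈ HS S₀ ↔ ω' ∈ HS S₀) := by
      intro ω ω' hag
      have hag' : ∀ b ∉ BS (↑S₀ : Set (Vertex d)), ω b = ω' b :=
        fun b hb => hag b (fun hmem => hb (hBSfin.mem_toFinset.mp hmem))
      exact connOff_congr_off hag'
    exact perc_indep hp0 hp1 hBSfin.toFinset _ (hWmeas S₀) hWdet _ (hHSmeas S₀) hHSdet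
  have hLHS : percMeasure d p {ω : Config d | Eev ω x u v y A} =
      ENNReal.ofReal p *
        ∑' S₀ : Finset (Vertex d), percMeasure d p (W S₀) * g ↑S₀ := by
    rw [hEevSet, hmueq, hfac, hD'sum]
    congr 1
    exact tsum_congr hterm
  -- The right-hand side
  set φ : Config d → ℝ≥0∞ :=
    fun ω => Set.indicator K (fun ω' => g (tildeC ω' u v x)) ω with hφdef
  set ψ : Config d → ℝ≥0∞ :=
    fun ω => ∑' S₀ : Finset (Vertex d), Set.indicator (W S₀) (fun _ => g ↑S₀) ω
    with hψdef
  have hψmeas : Measurable ψ :=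
    Measurable.ennreal_tsum (fun S₀ => measurable_const.indicator (hWmeas S₀))
  have hφψ : ∀ ω ∉ Bad, φ ω = ψ ω := by
    intro ω hbad
    by_cases hK : ω ∈ K
    · have hfin : (tildeC ω u v x).Finite :=
        Set.Finite.subset (Set.not_infinite.mp hbad) (tildeC_subset_cluster ω u v x)
      have hcoe : ↑hfin.toFinset = tildeC ω u v x := hfin.coe_toFinset
      have hWmem : ω ∈ W hfin.toFinset :=
        ⟨hcoe.symm, hK.1, by rw [hcoe]; exact hK.2⟩
      have hφval : φ ω = g (tildeC ω u v x) := Set.indicator_of_mem hK _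
      have hψval : ψ ω = g ↑hfin.toFinset := by
        simp only [hψdef]
        rw [tsum_eq_single hfin.toFinset ?_]
        · exact Set.indicator_of_mem hWmem _
        · intro S₁ hS₁
          apply Set.indicator_of_notMem
          intro hmem
          exact hS₁ (Finset.coe_injective (hmem.1.symm.trans hcoe.symm))
      rw [hφval, hψval, hcoe]
    · have hφval : φ ω = 0 := Set.indicator_of_notMem hK _
      have hψval : ψ ω = 0 := by
        simp only [hψdef]
        refine ENNReal.tsum_eq_zero.mpr (fun S₀ => Set.indicator_of_notMem ?_ _)
        intro hmem
        exact hK (hWK S₀ hmem)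
      rw [hφval, hψval]
  have hae : φ =ᵐ[percMeasure d p] ψ :=
    Filter.eventuallyEq_of_mem (MeasureTheory.compl_mem_ae_iff.mpr hBadnull) hφψ
  have hφle : ∀ ω, φ ω ≤ 1 := by
    intro ω
    by_cases hK : ω ∈ K
    · simp only [hφdef]
      rw [Set.indicator_of_mem hK]
      exact percMeasure_le_one p hp0 hp1 _
    · simp only [hφdef]
      rw [Set.indicator_of_notMem hK]
      exact zero_le_one
  have hint2 : ∫⁻ ω, ψ ω ∂(percMeasure d p) =
      ∑' S₀ : Finset (Vertex d), percMeasure d p (W S₀) * g ↑S₀ := by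
    simp only [hψdef]
    rw [lintegral_tsum
      (fun S₀ => (measurable_const.indicator (hWmeas S₀)).aemeasurable)]
    refine tsum_congr (fun S₀ => ?_)
    rw [lintegral_indicator_const (hWmeas S₀)]
    ring
  have hRHS : ∫ ω₀, Set.indicator K
        (fun ω' => (percMeasure d p {ω₁ | ConnOff ω₁ (tildeC ω' u v x) v y}).toReal) ω₀
        ∂(percMeasure d p) =
      (∑' S₀ : Finset (Vertex d), percMeasure d p (W S₀) * g ↑S₀).toReal := by
    have hieq : (fun ω₀ : Config d => Set.indicator K
        (fun ω' => (percMeasure d p {ω₁ | ConnOff ω₁ (tildeC ω' u v x) v y}).toReal) ω₀) =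
        fun ω₀ => (φ ω₀).toReal := by
      funext ω₀
      by_cases hK : ω₀ ∈ K
      · rw [Set.indicator_of_mem hK]
        simp only [hφdef]
        rw [Set.indicator_of_mem hK]
      · rw [Set.indicator_of_notMem hK]
        simp only [hφdef]
        rw [Set.indicator_of_notMem hK, ENNReal.toReal_zero]
    rw [hieq]
    rw [MeasureTheory.integral_toReal (hψmeas.aemeasurable.congr hae.symm) ?_]
    · rw [lintegral_congr_ae hae, hint2]
    · exact Filter.Eventually.of_forall
        (fun ω => lt_of_le_of_lt (hφle ω) ENNReal.one_lt_top)
  rw [hLHS, hRHS, ENNReal.toReal_mul, ENNReal.toReal_ofReal hp0]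

end NoBLE
end
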